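/- arXiv:2005.09277 — 6 statements merged into one kernel-verified Lean document; each statement's English description precedes it below -/
import Mathlib

section
/- Let A and B be msp-permutable subgroups of a finite group G with G = AB, and let p be the greatest prime dividing |G|. If A and B are both p-closed, then G is p-closed. -/
open Subgroup Pointwise

universe u

/-- Subgroups `X` and `Y` are *mutually permutable* if `UY = YU` for every subgroup
`U ≤ X` and `XV = VX` for every subgroup `V ≤ Y`. -/
def MutuallyPermutable {G : Type*} [Group G] (X Y : Subgroup G) : Prop :=
  (∀ U : Subgroup G, U ≤ X → (U : Set G) * (Y : Set G) = (Y : Set G) * (U : Set G)) ∧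
  (∀ V : Subgroup G, V ≤ Y → (X : Set G) * (V : Set G) = (V : Set G) * (X : Set G))

/-- `P` is a Sylow `p`-subgroup of the subgroup `H`: `P ≤ H`, `P` is a `p`-group and
`p` does not divide the index `[H : P]`. -/
def IsSylowSubgroupOf {G : Type*} [Group G] (p : ℕ) (P H : Subgroup G) : Prop :=
  P ≤ H ∧ IsPGroup p P ∧ Nat.Coprime p (P.relIndex H)

/-- Subgroups `A` and `B` are *msp-permutable* if `AB` is a subgroup of `G` and, for all
distinct primes `p ≠ q`, every Sylow `p`-subgroup of `A` and every Sylow `q`-subgroup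
of `B` are mutually permutable. -/
def MspPermutable {G : Type*} [Group G] (A B : Subgroup G) : Prop :=
  (∃ H : Subgroup G, (H : Set G) = (A : Set G) * (B : Set G)) ∧
  ∀ p q : ℕ, p.Prime → q.Prime → p ≠ q → ∀ P Q : Subgroup G,
    IsSylowSubgroupOf p P A → IsSylowSubgroupOf q Q B → MutuallyPermutable P Q

/-- `G` is `p`-closed: it has a normal Sylow `p`-subgroup. -/
def IsPClosed (p : ℕ) (G : Type*) [Group G] : Prop :=
  ∃ P : Sylow p G, (P : Subgroup G).Normal

section Helpers

variable {G : Type*} [Group G]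

variable {G : Type*} [Group G]

/-- The subgroup with carrier `H * K`, given that the set products commute. -/
def mulSubgroup (H K : Subgroup G) (hc : (H : Set G) * (K : Set G) = (K : Set G) * (H : Set G)) :
    Subgroup G where
  carrier := (H : Set G) * (K : Set G)
  one_mem' := ⟨1, one_mem _, 1, one_mem _, one_mul 1⟩
  mul_mem' := by
    rintro a b ⟨h, hh, k, hk, rfl⟩ ⟨h', hh', k', hk', rfl⟩
    have : k * h' ∈ (K : Set G) * (H : Set G) := ⟨k, hk, h', hh', rfl⟩
    rw [← hc] at this
    obtain ⟨h'', hh'', k'', hk'', hkh⟩ := this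
    refine ⟨h * h'', mul_mem hh hh'', k'' * k', mul_mem hk'' hk', ?_⟩
    have : h * k * (h' * k') = h * (k * h') * k' := by group
    rw [this, ← hkh]; group
  inv_mem' := by
    rintro a ⟨h, hh, k, hk, rfl⟩
    have : k⁻¹ * h⁻¹ ∈ (K : Set G) * (H : Set G) := ⟨k⁻¹, inv_mem hk, h⁻¹, inv_mem hh, rfl⟩
    rw [← hc] at this
    simpa [mul_inv_rev] using this

theorem mem_mulSubgroup_left {H K : Subgroup G} (hc) {g : G} (hg : g ∈ H) :
    g ∈ mulSubgroup H K hc := ⟨g, hg, 1, one_mem _, mul_one g⟩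

theorem mem_mulSubgroup_right {H K : Subgroup G} (hc) {g : G} (hg : g ∈ K) :
    g ∈ mulSubgroup H K hc := ⟨1, one_mem _, g, hg, one_mul g⟩

/-- Product formula for cardinalities of set-products of subgroups. -/
theorem card_mul_mul_card_inf [Finite G] (H K : Subgroup G) :
    Nat.card ((H : Set G) * (K : Set G) : Set G) * Nat.card (H ⊓ K : Subgroup G)
      = Nat.card H * Nat.card K := by
  letI : MulAction (↥H × ↥K) G :=
    { smul := fun hk g => (hk.1 : G) * g * (hk.2 : G)⁻¹
      one_smul := fun g => by
        show ((1 : ↥H) : G) * g * ((1 : ↥K) : G)⁻¹ = g; simp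
      mul_smul := fun x y g => by
        show ((x.1 * y.1 : ↥H) : G) * g * ((x.2 * y.2 : ↥K) : G)⁻¹
            = (x.1 : G) * ((y.1 : G) * g * (y.2 : G)⁻¹) * (x.2 : G)⁻¹
        push_cast
        group }
  have smul_def : ∀ (hk : ↥H × ↥K) (g : G), hk • g = (hk.1 : G) * g * (hk.2 : G)⁻¹ :=
    fun _ _ => rfl
  have horb : MulAction.orbit (↥H × ↥K) (1 : G) = (H : Set G) * (K : Set G) := by
    ext g
    constructor
    · rintro ⟨hk, rfl⟩
      refine ⟨hk.1, hk.1.2, (hk.2 : G)⁻¹, inv_mem hk.2.2, ?_⟩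
      show _ = hk • (1 : G)
      rw [smul_def, mul_one]
    · rintro ⟨h, hh, k, hk, rfl⟩
      refine ⟨(⟨h, hh⟩, ⟨k⁻¹, inv_mem hk⟩), ?_⟩
      show _ • (1 : G) = _
      rw [smul_def]; simp
  have hstab : Nat.card (MulAction.stabilizer (↥H × ↥K) (1 : G)) = Nat.card (H ⊓ K : Subgroup G) := by
    apply Nat.card_congr
    refine ⟨fun s => ⟨(s.1.1 : G), s.1.1.2, ?_⟩, fun m => ⟨(⟨(m : G), m.2.1⟩, ⟨(m : G), m.2.2⟩), ?_⟩, ?_, ?_⟩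
    · have : (s.1.1 : G) * 1 * (s.1.2 : G)⁻¹ = 1 := s.2
      have h2 : (s.1.1 : G) = (s.1.2 : G) := by
        rwa [mul_one, mul_inv_eq_one] at this
      rw [h2]; exact s.1.2.2
    · show ((m : G)) * 1 * ((m : G))⁻¹ = 1; simp
    · rintro ⟨⟨x, y⟩, hxy⟩
      have : (x : G) * 1 * (y : G)⁻¹ = 1 := hxy
      have h2 : (x : G) = (y : G) := by rwa [mul_one, mul_inv_eq_one] at this
      ext <;> simp [h2]
    · rintro ⟨m, hm⟩; rfl
  have horbcard : Nat.card (MulAction.orbit (↥H × ↥K) (1 : G))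
      = (MulAction.stabilizer (↥H × ↥K) (1 : G)).index := by
    rw [Subgroup.index_eq_card]
    exact Nat.card_congr (MulAction.orbitEquivQuotientStabilizer _ _)
  have hh := Subgroup.index_mul_card (MulAction.stabilizer (↥H × ↥K) (1 : G))
  rw [← horbcard, hstab] at hh
  rw [← horb]
  rw [hh, Nat.card_prod]

/-- A subgroup whose index is the smallest prime dividing the order of the group is normal. -/
theorem normal_of_index_min [Finite G] {H : Subgroup G} {q : ℕ} (hq : q.Prime)
    (hidx : H.index = q) (hmin : ∀ r : ℕ, r.Prime → r ∣ Nat.card G → q ≤ r) : H.Normal := by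
  have hKH := H.normalCore_le
  have hfq : (Nat.factorial q) ≠ 0 := Nat.factorial_ne_zero q
  have hker : H.normalCore.index ∣ Nat.factorial q := by
    rw [Subgroup.normalCore_eq_ker, Subgroup.index_ker]
    have h1 : Nat.card (MulAction.toPermHom G (G ⧸ H)).range ∣ Nat.card (Equiv.Perm (G ⧸ H)) :=
      Subgroup.card_subgroup_dvd_card _
    have : Nat.card (Equiv.Perm (G ⧸ H)) = Nat.factorial q := by
      haveI : Fintype (G ⧸ H) := Fintype.ofFinite _
      haveI : DecidableEq (G ⧸ H) := Classical.decEq _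
      rw [Nat.card_eq_fintype_card, Fintype.card_perm, ← Nat.card_eq_fintype_card,
        ← Subgroup.index_eq_card, hidx]
    rwa [this] at h1
  set r := H.normalCore.relIndex H with hr
  have h2 : r * q = H.normalCore.index := by rw [hr, ← hidx]; exact relIndex_mul_index hKH
  have hrfac : r ∣ Nat.factorial (q - 1) := by
    have hq1 : q - 1 + 1 = q := Nat.succ_pred_eq_of_pos hq.pos
    have : r * q ∣ Nat.factorial (q - 1) * q := by
      rw [h2]
      have : Nat.factorial (q - 1) * q = Nat.factorial q := by
        rw [← hq1, Nat.factorial_succ, hq1, mul_comm]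
      rw [this]; exact hker
    exact (Nat.mul_dvd_mul_iff_right hq.pos).mp this
  have hrG : r ∣ Nat.card G := by
    have h3 : r ∣ Nat.card H :=
      Subgroup.index_dvd_card (H.normalCore.subgroupOf H)
    exact h3.trans (Subgroup.card_subgroup_dvd_card H)
  have hr1 : r = 1 := by
    by_contra hne
    have hr0 : r ≠ 0 := by
      intro h0
      rw [h0, zero_mul] at h2
      exact (Subgroup.index_ne_zero_of_finite (H := H.normalCore)) h2.symm
    set s := r.minFac with hs
    have hsp : s.Prime := Nat.minFac_prime hne
    have hs1 : s ≤ q - 1 := (hsp.dvd_factorial).mp ((Nat.minFac_dvd r).trans hrfac)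
    have hs2 : q ≤ s := hmin s hsp ((Nat.minFac_dvd r).trans hrG)
    have hq2 : 2 ≤ q := hq.two_le
    omega
  have : H ≤ H.normalCore := Subgroup.relIndex_eq_one.mp hr1
  have heq : H.normalCore = H := le_antisymm hKH this
  rw [← heq]
  exact H.normalCore_normal

/-- Key lemma: if a `p`-subgroup `R` permutes with every subgroup of `⟨x⟩` for a `q`-element
`x` with `q < p`, then `x` normalizes `R`. -/
theorem mem_normalizer_of_mul_comm [Finite G] {p q : ℕ} (hp : p.Prime) (hq : q.Prime)
    (hqp : q < p) {R : Subgroup G} (hR : IsPGroup p R) :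
    ∀ (n : ℕ) (x : G), orderOf x ≤ n → (∃ k, orderOf x = q ^ k) →
      (∀ V : Subgroup G, V ≤ zpowers x → (R : Set G) * (V : Set G) = (V : Set G) * (R : Set G)) →
      x ∈ normalizer (R : Set G) := by
  haveI : Fact p.Prime := ⟨hp⟩
  haveI : Fact q.Prime := ⟨hq⟩
  have hpq : p ≠ q := hqp.ne'
  intro n
  induction n with
  | zero => intro x hle _ _; exact absurd (Nat.le_zero.mp hle) (orderOf_pos x).ne'
  | succ n ih =>
    intro x hle hx hperm
    by_cases hx1 : x = 1
    · subst hx1; exact Subgroup.one_mem _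
    obtain ⟨k, hk⟩ := hx
    have hk0 : k ≠ 0 := by
      intro h0; rw [h0, pow_zero, orderOf_eq_one_iff] at hk; exact hx1 hk
    -- every element of ⟨x^q⟩ normalizes R
    have hxqord : orderOf (x ^ q) = q ^ (k - 1) := by
      rw [orderOf_pow, hk, Nat.gcd_eq_right (dvd_pow_self q hk0)]
      have hqk : q ^ k = q ^ (k - 1) * q := by
        rw [← pow_succ]; congr 1; omega
      rw [hqk, Nat.mul_div_cancel _ hq.pos]
    have hxq_norm : ∀ z ∈ zpowers (x ^ q), z ∈ normalizer (R : Set G) := by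
      intro z hz
      have hzle : zpowers z ≤ zpowers x :=
        le_trans (zpowers_le.mpr hz) (zpowers_le.mpr (pow_mem (mem_zpowers x) q))
      have hzord : orderOf z ∣ q ^ (k - 1) := hxqord ▸ orderOf_dvd_of_mem_zpowers hz
      obtain ⟨j, _, hj⟩ := (Nat.dvd_prime_pow hq).mp hzord
      refine ih z ?_ ⟨j, hj⟩ (fun V hV => hperm V (hV.trans hzle))
      have h1 : orderOf z ≤ q ^ (k - 1) := Nat.le_of_dvd (pow_pos hq.pos _) hzord
      have h2 : q ^ (k - 1) < q ^ k :=
        Nat.pow_lt_pow_right hq.one_lt (Nat.pred_lt hk0)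
      omega
    -- the two product subgroups
    have hxsub : zpowers (x ^ q) ≤ zpowers x := zpowers_le.mpr (pow_mem (mem_zpowers x) q)
    have hcomm' := hperm (zpowers (x ^ q)) hxsub
    have hcomm := hperm (zpowers x) le_rfl
    set H' := mulSubgroup R (zpowers (x ^ q)) hcomm' with hH'def
    set H := mulSubgroup R (zpowers x) hcomm with hHdef
    have hH'H : H' ≤ H := by
      intro g hg
      exact Set.mul_subset_mul subset_rfl (SetLike.coe_subset_coe.mpr hxsub) hg
    have hxH : x ∈ H := mem_mulSubgroup_right _ (mem_zpowers x)
    have hRH' : R ≤ H' := fun r hr => mem_mulSubgroup_left _ hr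
    have hRH : R ≤ H := fun r hr => mem_mulSubgroup_left _ hr
    -- cardinalities
    obtain ⟨m, hm⟩ := IsPGroup.iff_card.mp hR
    have hpgx : IsPGroup q (zpowers x) := IsPGroup.of_card (by rw [Nat.card_zpowers, hk])
    have hpgxq : IsPGroup q (zpowers (x ^ q)) :=
      IsPGroup.of_card (by rw [Nat.card_zpowers, hxqord])
    have hdisj : R ⊓ zpowers x = ⊥ :=
      (IsPGroup.disjoint_of_ne p q hpq R (zpowers x) hR hpgx).eq_bot
    have hdisj' : R ⊓ zpowers (x ^ q) = ⊥ :=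
      (IsPGroup.disjoint_of_ne p q hpq R (zpowers (x ^ q)) hR hpgxq).eq_bot
    have hcardH : Nat.card H = Nat.card R * q ^ k := by
      have h1 := card_mul_mul_card_inf R (zpowers x)
      rw [hdisj, Subgroup.card_bot, mul_one, Nat.card_zpowers, hk] at h1
      exact h1
    have hcardH' : Nat.card H' = Nat.card R * q ^ (k - 1) := by
      have h1 := card_mul_mul_card_inf R (zpowers (x ^ q))
      rw [hdisj', Subgroup.card_bot, mul_one, Nat.card_zpowers, hxqord] at h1
      exact h1
    -- index of H' in H is q
    have hpos : 0 < Nat.card R * q ^ (k - 1) :=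
      Nat.mul_pos Nat.card_pos (pow_pos hq.pos _)
    have hrel : (H'.subgroupOf H).index = q := by
      have h1 := Subgroup.index_mul_card (H'.subgroupOf H)
      rw [Nat.card_congr (subgroupOfEquivOfLe hH'H).toEquiv, hcardH', hcardH] at h1
      have h2 : q ^ k = q * q ^ (k - 1) := by
        rw [← pow_succ']; congr 1; omega
      rw [h2] at h1
      apply Nat.eq_of_mul_eq_mul_right hpos
      rw [h1]; ring
    -- H' is normal in H
    have hnormal : (H'.subgroupOf H).Normal := by
      apply normal_of_index_min hq hrel
      intro r hr hrdvd
      rw [hcardH, hm] at hrdvd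
      rcases (Nat.Prime.dvd_mul hr).mp hrdvd with h | h
      · have := hr.dvd_of_dvd_pow h
        rw [Nat.prime_dvd_prime_iff_eq hr hp] at this
        omega
      · have := hr.dvd_of_dvd_pow h
        rw [Nat.prime_dvd_prime_iff_eq hr hq] at this
        omega
    -- every element of H' normalizes R
    have hH'norm : ∀ h ∈ H', h ∈ normalizer (R : Set G) := by
      have base : ∀ h ∈ H', ∀ g ∈ R, h * g * h⁻¹ ∈ R := by
        rintro h ⟨r, hr, w, hw, rfl⟩ g hg
        have hwn := hxq_norm w hw
        have h1 : w * g * w⁻¹ ∈ R := (Subgroup.mem_normalizer_iff.mp hwn g).mp hg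
        have h2 : r * (w * g * w⁻¹) * r⁻¹ ∈ R := mul_mem (mul_mem hr h1) (inv_mem hr)
        have h3 : r * w * g * (r * w)⁻¹ = r * (w * g * w⁻¹) * r⁻¹ := by group
        rwa [h3]
      intro h hh
      rw [Subgroup.mem_normalizer_iff]
      intro g
      constructor
      · exact fun hg => base h hh g hg
      · intro hg
        have h4 := base h⁻¹ (inv_mem hh) _ hg
        have h5 : h⁻¹ * (h * g * h⁻¹) * h⁻¹⁻¹ = g := by group
        rwa [h5] at h4
    -- conjugate of R by x
    set T := R.map (MulAut.conj x).toMonoidHom with hTdef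
    have hTmem : ∀ t, t ∈ T ↔ ∃ g ∈ R, x * g * x⁻¹ = t := by
      intro t
      simp [hTdef, Subgroup.mem_map, MulAut.conj_apply]
    have hTH' : T ≤ H' := by
      intro t ht
      obtain ⟨g, hg, rfl⟩ := (hTmem t).mp ht
      have hgH : g ∈ H := hRH hg
      have h6 := hnormal.conj_mem (⟨g, hgH⟩ : ↥H)
        (by rw [Subgroup.mem_subgroupOf]; exact hRH' hg) ⟨x, hxH⟩
      rw [Subgroup.mem_subgroupOf] at h6
      simpa using h6
    have hTnorm : T ≤ normalizer (R : Set G) := fun t ht => hH'norm t (hTH' ht)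
    have hTp : IsPGroup p T := hR.map _
    have hLp : IsPGroup p (T ⊔ R : Subgroup G) := IsPGroup.to_sup_of_normal_right' hTp hR hTnorm
    have hLH' : T ⊔ R ≤ H' := sup_le hTH' hRH'
    obtain ⟨l, hl⟩ := IsPGroup.iff_card.mp hLp
    have hdl : Nat.card (T ⊔ R : Subgroup G) ∣ Nat.card H' := Subgroup.card_dvd_of_le hLH'
    rw [hl, hcardH', hm] at hdl
    have hcop : Nat.Coprime (p ^ l) (q ^ (k - 1)) :=
      Nat.Coprime.pow _ _ ((Nat.coprime_primes hp hq).mpr hpq)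
    have hdl2 : p ^ l ∣ p ^ m := hcop.dvd_of_dvd_mul_right hdl
    have hcardLR : Nat.card (T ⊔ R : Subgroup G) ≤ Nat.card R :=
      Nat.le_of_dvd Nat.card_pos (by rw [hl, hm]; exact hdl2)
    have hReq : R = T ⊔ R := Subgroup.eq_of_le_of_card_ge le_sup_right hcardLR
    have hTR : T ≤ R := hReq ▸ le_sup_left
    have hcardT : Nat.card T = Nat.card R :=
      (Nat.card_congr (Subgroup.equivMapOfInjective R (MulAut.conj x).toMonoidHom
        (MulAut.conj x).injective).toEquiv).symm
    have hTReq : T = R := Subgroup.eq_of_le_of_card_ge hTR (le_of_eq hcardT.symm)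
    rw [Subgroup.mem_normalizer_iff]
    intro g
    constructor
    · intro hg
      have ht : x * g * x⁻¹ ∈ T := (hTmem _).mpr ⟨g, hg, rfl⟩
      rwa [hTReq] at ht
    · intro hg
      rw [← hTReq] at hg
      obtain ⟨g', hg', heq⟩ := (hTmem _).mp hg
      have hgg : g' = g := mul_left_cancel (mul_right_cancel heq)
      exact hgg ▸ hg'

/-- Every element of a subgroup lies in the closure of the set of its elements of
prime power order. -/
theorem mem_closure_primePow [Finite G] (K : Subgroup G) :
    ∀ (n : ℕ) (b : G), b ∈ K → orderOf b = n →
      b ∈ Subgroup.closure {x : G | x ∈ K ∧ ∃ q k, Nat.Prime q ∧ orderOf x = q ^ k} := by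
  intro n
  induction n using Nat.strong_induction_on with
  | _ n ih =>
    intro b hbK hn
    have hn0 : n ≠ 0 := fun h0 => (orderOf_pos b).ne' (h0 ▸ hn)
    by_cases hn1 : n = 1
    · have hb1 : b = 1 := by rw [← orderOf_eq_one_iff, hn, hn1]
      exact hb1 ▸ one_mem _
    set q := n.minFac with hqdef
    have hqp : q.Prime := Nat.minFac_prime hn1
    set v := n.factorization q with hvdef
    set m := n / q ^ v with hmdef
    have hnm : q ^ v * m = n := Nat.ordProj_mul_ordCompl_eq_self n q
    have hmdvd : m ∣ n := ⟨q ^ v, by rw [← hnm, mul_comm]⟩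
    have hqvdvd : q ^ v ∣ n := Nat.ordProj_dvd n q
    have hm0 : m ≠ 0 := (Nat.ordCompl_pos q hn0).ne'
    have hqv1 : 1 < q ^ v := by
      have hv0 : 0 < v := by
        rw [hvdef]
        exact (Nat.Prime.factorization_pos_of_dvd hqp hn0 (Nat.minFac_dvd n))
      exact Nat.one_lt_pow hv0.ne' hqp.one_lt
    have hdord : orderOf (b ^ m) = q ^ v := by
      rw [orderOf_pow, hn, Nat.gcd_eq_right hmdvd]
      rw [← hnm, Nat.mul_div_cancel _ (Nat.pos_of_ne_zero hm0)]
    have hdS : b ^ m ∈ Subgroup.closure {x : G | x ∈ K ∧ ∃ q k, Nat.Prime q ∧ orderOf x = q ^ k} :=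
      Subgroup.subset_closure ⟨pow_mem hbK m, q, v, hqp, hdord⟩
    by_cases hm1 : m = 1
    · have : b = b ^ m := by rw [hm1, pow_one]
      exact this ▸ hdS
    · have hcord : orderOf (b ^ (q ^ v)) = m := by
        rw [orderOf_pow, hn, Nat.gcd_eq_right hqvdvd, ← hnm,
          Nat.mul_div_cancel_left _ (Nat.pos_of_ne_zero (by positivity))]
      have hmlt : m < n := by
        rw [hmdef]
        exact Nat.div_lt_self (Nat.pos_of_ne_zero hn0) hqv1
      have hcS := ih m hmlt (b ^ (q ^ v)) (pow_mem hbK _) hcord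
      -- Bezout
      have hcop : Nat.Coprime (q ^ v) m := Nat.Coprime.pow_left _ (Nat.coprime_ordCompl hqp hn0)
      have hicop : IsCoprime (q ^ v : ℤ) (m : ℤ) := by
        rw [Int.isCoprime_iff_gcd_eq_one]
        exact_mod_cast hcop
      obtain ⟨u, w, huw⟩ := hicop
      have hb : (b ^ (q ^ v)) ^ u * (b ^ m) ^ w = b := by
        rw [← zpow_natCast b (q ^ v), ← zpow_natCast b m, ← zpow_mul, ← zpow_mul, ← zpow_add]
        have huw2 : (↑(q ^ v) * u + ↑m * w : ℤ) = 1 := by push_cast; linear_combination huw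
        rw [huw2, zpow_one]
      rw [← hb]
      exact mul_mem (zpow_mem hcS u) (zpow_mem hdS w)

/-- The image in `G` of a Sylow `q`-subgroup of `K` is a Sylow subgroup of `K` in the
`IsSylowSubgroupOf` sense. -/
theorem sylow_map_isSylowSubgroupOf [Finite G] {q : ℕ} (hq : q.Prime) (K : Subgroup G)
    (S : Sylow q ↥K) :
    ((S : Subgroup ↥K).map K.subtype) ≤ K ∧ IsPGroup q ((S : Subgroup ↥K).map K.subtype) ∧
      Nat.Coprime q (((S : Subgroup ↥K).map K.subtype).relIndex K) := by
  haveI : Fact q.Prime := ⟨hq⟩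
  refine ⟨Subgroup.map_subtype_le _, S.2.map _, ?_⟩
  have h1 : ((S : Subgroup ↥K).map K.subtype).subgroupOf K = (S : Subgroup ↥K) := by
    rw [Subgroup.subgroupOf]
    exact Subgroup.comap_map_eq_self_of_injective K.subtype_injective _
  show Nat.Coprime q ((((S : Subgroup ↥K).map K.subtype).subgroupOf K).index)
  rw [h1]
  exact hq.coprime_iff_not_dvd.mpr (Sylow.not_dvd_index S)

theorem map_conj_eq_of_mem_normalizer {H : Subgroup G} {x : G} (hx : x ∈ normalizer (H : Set G)) :
    H.map (MulAut.conj x).toMonoidHom = H := by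
  ext y
  constructor
  · rintro ⟨g, hg, rfl⟩
    simpa [MulAut.conj_apply] using (Subgroup.mem_normalizer_iff.mp hx g).mp hg
  · intro hy
    refine ⟨x⁻¹ * y * x, ?_, by simp [MulAut.conj_apply]; group⟩
    have h1 : x * (x⁻¹ * y * x) * x⁻¹ = y := by group
    exact (Subgroup.mem_normalizer_iff.mp hx _).mpr (h1.symm ▸ hy)

theorem mem_normalizer_sup {H K : Subgroup G} {x : G} (hH : x ∈ normalizer (H : Set G))
    (hK : x ∈ normalizer (K : Set G)) : x ∈ normalizer ((H ⊔ K : Subgroup G) : Set G) := by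
  have hmap : (H ⊔ K).map (MulAut.conj x).toMonoidHom = H ⊔ K := by
    rw [Subgroup.map_sup, map_conj_eq_of_mem_normalizer hH, map_conj_eq_of_mem_normalizer hK]
  rw [Subgroup.mem_normalizer_iff]
  intro g
  constructor
  · intro hg
    have : (MulAut.conj x).toMonoidHom g ∈ (H ⊔ K).map (MulAut.conj x).toMonoidHom :=
      Subgroup.mem_map_of_mem _ hg
    rw [hmap] at this
    simpa [MulAut.conj_apply] using this
  · intro hg
    rw [← hmap] at hg
    obtain ⟨g', hg', heq⟩ := hg
    simp only [MulEquiv.coe_toMonoidHom, MulAut.conj_apply] at heq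
    have : g' = g := mul_left_cancel (mul_right_cancel heq)
    exact this ▸ hg'

end Helpers

/-- If `G = AB` with `A`, `B` msp-permutable and `p`-closed, where `p` is the greatest
prime dividing `|G|`, then `G` is `p`-closed. -/
theorem pClosed_of_msp_permutable_product {G : Type u} [Group G] [Finite G]
    (A B : Subgroup G) (h : MspPermutable A B)
    (hG : (A : Set G) * (B : Set G) = Set.univ)
    (p : ℕ) (hp : p.Prime) (hdvd : p ∣ Nat.card G)
    (hmax : ∀ q : ℕ, q.Prime → q ∣ Nat.card G → q ≤ p)
    (hA : IsPClosed p A) (hB : IsPClosed p B) : IsPClosed p G := by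
  haveI : Fact p.Prime := ⟨hp⟩
  obtain ⟨SA, hSA⟩ := hA
  obtain ⟨SB, hSB⟩ := hB
  set P : Subgroup G := (SA : Subgroup ↥A).map A.subtype with hPdef
  set Q : Subgroup G := (SB : Subgroup ↥B).map B.subtype with hQdef
  obtain ⟨hPA, hPp, hPrel⟩ := sylow_map_isSylowSubgroupOf hp A SA
  obtain ⟨hQB, hQp, hQrel⟩ := sylow_map_isSylowSubgroupOf hp B SB
  have hP_syl : IsSylowSubgroupOf p P A := ⟨hPA, hPp, hPrel⟩
  have hQ_syl : IsSylowSubgroupOf p Q B := ⟨hQB, hQp, hQrel⟩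
  -- conjugation stability of the normal Sylow subgroups
  have hP_conjA : ∀ a ∈ A, ∀ g ∈ P, a * g * a⁻¹ ∈ P := by
    rintro a ha g ⟨g', hg', rfl⟩
    exact ⟨⟨a, ha⟩ * g' * ⟨a, ha⟩⁻¹, hSA.conj_mem g' hg' ⟨a, ha⟩, rfl⟩
  have hQ_conjB : ∀ b ∈ B, ∀ g ∈ Q, b * g * b⁻¹ ∈ Q := by
    rintro b hb g ⟨g', hg', rfl⟩
    exact ⟨⟨b, hb⟩ * g' * ⟨b, hb⟩⁻¹, hSB.conj_mem g' hg' ⟨b, hb⟩, rfl⟩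
  have hP_normA : ∀ a ∈ A, a ∈ normalizer (P : Set G) := by
    intro a ha
    rw [Subgroup.mem_normalizer_iff]
    intro g
    constructor
    · exact fun hg => hP_conjA a ha g hg
    · intro hg
      have h2 := hP_conjA a⁻¹ (inv_mem ha) _ hg
      have h3 : a⁻¹ * (a * g * a⁻¹) * a⁻¹⁻¹ = g := by group
      rwa [h3] at h2
  have hQ_normB : ∀ b ∈ B, b ∈ normalizer (Q : Set G) := by
    intro b hb
    rw [Subgroup.mem_normalizer_iff]
    intro g
    constructor
    · exact fun hg => hQ_conjB b hb g hg
    · intro hg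
      have h2 := hQ_conjB b⁻¹ (inv_mem hb) _ hg
      have h3 : b⁻¹ * (b * g * b⁻¹) * b⁻¹⁻¹ = g := by group
      rwa [h3] at h2
  -- maximality: p-elements of A (resp. B) lie in P (resp. Q)
  haveI := Sylow.unique_of_normal SA hSA
  haveI := Sylow.unique_of_normal SB hSB
  have hP_max : ∀ x ∈ A, (∃ k, orderOf x = p ^ k) → x ∈ P := by
    rintro x hx ⟨k, hk⟩
    have hx' : orderOf (⟨x, hx⟩ : ↥A) = p ^ k := by
      rw [Subgroup.orderOf_mk]; exact hk
    have hpg : IsPGroup p (Subgroup.zpowers (⟨x, hx⟩ : ↥A)) :=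
      IsPGroup.of_card (by rw [Nat.card_zpowers, hx'])
    obtain ⟨S', hS'⟩ := hpg.exists_le_sylow
    have hSeq : S' = SA := Subsingleton.elim _ _
    exact ⟨⟨x, hx⟩, hSeq ▸ hS' (Subgroup.mem_zpowers _), rfl⟩
  have hQ_max : ∀ x ∈ B, (∃ k, orderOf x = p ^ k) → x ∈ Q := by
    rintro x hx ⟨k, hk⟩
    have hx' : orderOf (⟨x, hx⟩ : ↥B) = p ^ k := by
      rw [Subgroup.orderOf_mk]; exact hk
    have hpg : IsPGroup p (Subgroup.zpowers (⟨x, hx⟩ : ↥B)) :=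
      IsPGroup.of_card (by rw [Nat.card_zpowers, hx'])
    obtain ⟨S', hS'⟩ := hpg.exists_le_sylow
    have hSeq : S' = SB := Subsingleton.elim _ _
    exact ⟨⟨x, hx⟩, hSeq ▸ hS' (Subgroup.mem_zpowers _), rfl⟩
  -- q-elements of B normalize P
  have hBnormP : ∀ x ∈ B, ∀ q k : ℕ, q.Prime → q ≠ p → orderOf x = q ^ k →
      x ∈ normalizer (P : Set G) := by
    intro x hx q k hq hqnep hord
    by_cases hx1 : x = 1
    · exact hx1 ▸ Subgroup.one_mem _
    have hk0 : k ≠ 0 := fun h0 => hx1 (by rwa [h0, pow_zero, orderOf_eq_one_iff] at hord)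
    have hqG : q ∣ Nat.card G :=
      (hord ▸ dvd_pow_self q hk0 : q ∣ orderOf x).trans (orderOf_dvd_natCard x)
    have hqlt : q < p := lt_of_le_of_ne (hmax q hq hqG) hqnep
    haveI : Fact q.Prime := ⟨hq⟩
    have hx' : orderOf (⟨x, hx⟩ : ↥B) = q ^ k := by
      rw [Subgroup.orderOf_mk]; exact hord
    have hpg : IsPGroup q (Subgroup.zpowers (⟨x, hx⟩ : ↥B)) :=
      IsPGroup.of_card (by rw [Nat.card_zpowers, hx'])
    obtain ⟨SQ, hSQ⟩ := hpg.exists_le_sylow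
    obtain ⟨h1, h2, h3⟩ := sylow_map_isSylowSubgroupOf hq B SQ
    have hmut := h.2 p q hp hq (Ne.symm hqnep) P ((SQ : Subgroup ↥B).map B.subtype)
      hP_syl ⟨h1, h2, h3⟩
    have hxQB : Subgroup.zpowers x ≤ (SQ : Subgroup ↥B).map B.subtype := by
      rw [Subgroup.zpowers_le]
      exact ⟨⟨x, hx⟩, hSQ (Subgroup.mem_zpowers _), rfl⟩
    exact mem_normalizer_of_mul_comm hp hq hqlt hPp (orderOf x) x le_rfl ⟨k, hord⟩
      (fun V hV => hmut.2 V (hV.trans hxQB))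
  -- q-elements of A normalize Q
  have hAnormQ : ∀ x ∈ A, ∀ q k : ℕ, q.Prime → q ≠ p → orderOf x = q ^ k →
      x ∈ normalizer (Q : Set G) := by
    intro x hx q k hq hqnep hord
    by_cases hx1 : x = 1
    · exact hx1 ▸ Subgroup.one_mem _
    have hk0 : k ≠ 0 := fun h0 => hx1 (by rwa [h0, pow_zero, orderOf_eq_one_iff] at hord)
    have hqG : q ∣ Nat.card G :=
      (hord ▸ dvd_pow_self q hk0 : q ∣ orderOf x).trans (orderOf_dvd_natCard x)
    have hqlt : q < p := lt_of_le_of_ne (hmax q hq hqG) hqnep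
    haveI : Fact q.Prime := ⟨hq⟩
    have hx' : orderOf (⟨x, hx⟩ : ↥A) = q ^ k := by
      rw [Subgroup.orderOf_mk]; exact hord
    have hpg : IsPGroup q (Subgroup.zpowers (⟨x, hx⟩ : ↥A)) :=
      IsPGroup.of_card (by rw [Nat.card_zpowers, hx'])
    obtain ⟨SQ, hSQ⟩ := hpg.exists_le_sylow
    obtain ⟨h1, h2, h3⟩ := sylow_map_isSylowSubgroupOf hq A SQ
    have hmut := h.2 q p hq hp hqnep ((SQ : Subgroup ↥A).map A.subtype) Q
      ⟨h1, h2, h3⟩ hQ_syl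
    have hxQA : Subgroup.zpowers x ≤ (SQ : Subgroup ↥A).map A.subtype := by
      rw [Subgroup.zpowers_le]
      exact ⟨⟨x, hx⟩, hSQ (Subgroup.mem_zpowers _), rfl⟩
    exact mem_normalizer_of_mul_comm hp hq hqlt hQp (orderOf x) x le_rfl ⟨k, hord⟩
      (fun V hV => (hmut.1 V (hV.trans hxQA)).symm)
  set N : Subgroup G := P ⊔ Q with hNdef
  -- N is a p-group: P and Q lie in a common Sylow subgroup
  have hNp : IsPGroup p N := by
    obtain ⟨S, hPS⟩ := hPp.exists_le_sylow
    obtain ⟨R, hQR⟩ := hQp.exists_le_sylow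
    obtain ⟨g, hg⟩ := MulAction.exists_smul_eq G S R
    have hginv : g⁻¹ ∈ (A : Set G) * (B : Set G) := by rw [hG]; trivial
    obtain ⟨a, ha, b, hb, hab⟩ := hginv
    have hab' : a * b = g⁻¹ := hab
    have hbg : b * g = a⁻¹ := by
      have hg2 : g = b⁻¹ * a⁻¹ := by
        rw [← mul_inv_rev, hab']
        simp
      rw [hg2]
      group
    have hPU : P ≤ ((a⁻¹ • S : Sylow p G) : Subgroup G) := by
      intro y hy
      rw [show ((a⁻¹ • S : Sylow p G) : Subgroup G) = MulAut.conj a⁻¹ • (S : Subgroup G) from rfl,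
        Subgroup.mem_pointwise_smul_iff_inv_smul_mem]
      have : (MulAut.conj a⁻¹)⁻¹ • y = a * y * a⁻¹ := by
        simp [MulAut.smul_def, MulAut.conj_apply]
      rw [this]
      exact hPS (hP_conjA a ha y hy)
    have hQU : Q ≤ ((a⁻¹ • S : Sylow p G) : Subgroup G) := by
      have hUR : (a⁻¹ • S : Sylow p G) = b • R := by
        rw [← hg, smul_smul, hbg]
      intro y hy
      rw [show ((a⁻¹ • S : Sylow p G) : Subgroup G) = ((b • R : Sylow p G) : Subgroup G) by rw [hUR],
        show ((b • R : Sylow p G) : Subgroup G) = MulAut.conj b • (R : Subgroup G) from rfl,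
        Subgroup.mem_pointwise_smul_iff_inv_smul_mem]
      have : (MulAut.conj b)⁻¹ • y = b⁻¹ * y * b := by
        simp [MulAut.smul_def, MulAut.conj_apply]
      rw [this]
      have h4 : b⁻¹ * y * b = b⁻¹ * y * b⁻¹⁻¹ := by group
      rw [h4]
      exact hQR (hQ_conjB b⁻¹ (inv_mem hb) y hy)
    exact (a⁻¹ • S : Sylow p G).2.to_le (sup_le hPU hQU)
  -- N is normal in G
  have hPN : P ≤ N := le_sup_left
  have hQN : Q ≤ N := le_sup_right
  have hN_norm : N.Normal := by
    rw [← Subgroup.normalizer_eq_top_iff, eq_top_iff]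
    intro g _
    have hg : g ∈ (A : Set G) * (B : Set G) := by rw [hG]; trivial
    obtain ⟨a, ha, b, hb, rfl⟩ := hg
    have hclosA : {x : G | x ∈ A ∧ ∃ q k, Nat.Prime q ∧ orderOf x = q ^ k} ⊆
        ↑(normalizer (N : Set G)) := by
      rintro x ⟨hxA, q, k, hq, hord⟩
      by_cases hqp : q = p
      · exact Subgroup.le_normalizer (hPN (hP_max x hxA ⟨k, by rw [hord, hqp]⟩))
      · exact mem_normalizer_sup (hP_normA x hxA) (hAnormQ x hxA q k hq hqp hord)
    have hclosB : {x : G | x ∈ B ∧ ∃ q k, Nat.Prime q ∧ orderOf x = q ^ k} ⊆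
        ↑(normalizer (N : Set G)) := by
      rintro x ⟨hxB, q, k, hq, hord⟩
      by_cases hqp : q = p
      · exact Subgroup.le_normalizer (hQN (hQ_max x hxB ⟨k, by rw [hord, hqp]⟩))
      · exact mem_normalizer_sup (hBnormP x hxB q k hq hqp hord) (hQ_normB x hxB)
    have haN : a ∈ normalizer (N : Set G) :=
      (Subgroup.closure_le _ |>.mpr hclosA) (mem_closure_primePow A (orderOf a) a ha rfl)
    have hbN : b ∈ normalizer (N : Set G) :=
      (Subgroup.closure_le _ |>.mpr hclosB) (mem_closure_primePow B (orderOf b) b hb rfl)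
    exact mul_mem haN hbN
  haveI : N.Normal := hN_norm
  -- p does not divide the index of N
  set π : G →* G ⧸ N := QuotientGroup.mk' N with hπ
  have hpelem : ∀ (K : Subgroup G) (R : Subgroup G), R ≤ N →
      (∀ x ∈ K, (∃ k, orderOf x = p ^ k) → x ∈ R) → ¬ p ∣ Nat.card (K.map π) := by
    intro K R hRN hKmax hpdvd
    obtain ⟨y, hy⟩ := exists_prime_orderOf_dvd_card' (G := ↥(K.map π)) p hpdvd
    obtain ⟨a, ha, hπa⟩ := Subgroup.mem_map.mp y.2
    set n := orderOf a with hn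
    have hn0 : n ≠ 0 := (orderOf_pos a).ne'
    set m := ordCompl[p] n with hm
    have hmdvd : m ∣ n := Nat.ordCompl_dvd n p
    have haord : orderOf (a ^ m) = p ^ n.factorization p := by
      rw [orderOf_pow, ← hn, Nat.gcd_eq_right hmdvd, hm, Nat.div_div_self (Nat.ordProj_dvd n p) hn0]
    have haP : a ^ m ∈ R := hKmax _ (pow_mem ha m) ⟨_, haord⟩
    have hπam : π (a ^ m) = 1 := (QuotientGroup.eq_one_iff _).mpr (hRN haP)
    have hyo : orderOf (y : G ⧸ N) = p := by
      rw [← hy]; exact Subgroup.orderOf_coe y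
    have h1 : (y : G ⧸ N) ^ m = 1 := by
      rw [← hπa, ← map_pow, hπam]
    have h2 : p ∣ m := hyo ▸ orderOf_dvd_of_pow_eq_one h1
    exact Nat.not_dvd_ordCompl hp hn0 (hm ▸ h2)
  have hA' : ¬ p ∣ Nat.card (A.map π) := hpelem A P le_sup_left hP_max
  have hB' : ¬ p ∣ Nat.card (B.map π) := hpelem B Q le_sup_right hQ_max
  -- p does not divide [G : N]
  have hindex : ¬ p ∣ N.index := by
    rw [Subgroup.index_eq_card]
    letI : MulAction (↥(A.map π) × ↥(B.map π)) (G ⧸ N) :=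
      { smul := fun k g => (k.1 : G ⧸ N) * g * (k.2 : G ⧸ N)⁻¹
        one_smul := fun g => by
          show ((1 : ↥(A.map π)) : G ⧸ N) * g * ((1 : ↥(B.map π)) : G ⧸ N)⁻¹ = g
          simp
        mul_smul := fun x y g => by
          show ((x.1 * y.1 : ↥(A.map π)) : G ⧸ N) * g * ((x.2 * y.2 : ↥(B.map π)) : G ⧸ N)⁻¹
              = (x.1 : G ⧸ N) * ((y.1 : G ⧸ N) * g * (y.2 : G ⧸ N)⁻¹) * (x.2 : G ⧸ N)⁻¹
          push_cast
          group }
    have smul_def : ∀ (k : ↥(A.map π) × ↥(B.map π)) (g : G ⧸ N),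
        k • g = (k.1 : G ⧸ N) * g * (k.2 : G ⧸ N)⁻¹ := fun _ _ => rfl
    have horb : MulAction.orbit (↥(A.map π) × ↥(B.map π)) (1 : G ⧸ N) = Set.univ := by
      rw [Set.eq_univ_iff_forall]
      intro gbar
      obtain ⟨g, rfl⟩ := QuotientGroup.mk'_surjective N gbar
      have hg : g ∈ (A : Set G) * (B : Set G) := by rw [hG]; trivial
      obtain ⟨a, ha, b, hb, hab⟩ := hg
      have hab' : a * b = g := hab
      refine ⟨(⟨π a, Subgroup.mem_map_of_mem _ ha⟩,
        ⟨(π b)⁻¹, inv_mem (Subgroup.mem_map_of_mem _ hb)⟩), ?_⟩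
      show π a * (1 : G ⧸ N) * ((π b)⁻¹)⁻¹ = π g
      rw [← hab']
      simp
    have hcard : Nat.card (G ⧸ N) ∣ Nat.card (A.map π) * Nat.card (B.map π) := by
      have h1 : Nat.card (MulAction.orbit (↥(A.map π) × ↥(B.map π)) (1 : G ⧸ N)) =
          (MulAction.stabilizer (↥(A.map π) × ↥(B.map π)) (1 : G ⧸ N)).index := by
        rw [Subgroup.index_eq_card]
        exact Nat.card_congr (MulAction.orbitEquivQuotientStabilizer _ _)
      have h2 : Nat.card (G ⧸ N) = Nat.card (MulAction.orbit (↥(A.map π) × ↥(B.map π))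
          (1 : G ⧸ N)) := by
        rw [horb]
        exact (Nat.card_congr (Equiv.Set.univ _)).symm
      rw [h2, h1, ← Nat.card_prod]
      exact ⟨_, (Subgroup.index_mul_card _).symm⟩
    intro hp2
    rcases (Nat.Prime.dvd_mul hp).mp (hp2.trans hcard) with hd | hd
    · exact hA' hd
    · exact hB' hd
  -- conclude: any Sylow subgroup containing N equals N
  obtain ⟨S', hS'⟩ := hNp.exists_le_sylow
  refine ⟨S', ?_⟩
  have heq : (S' : Subgroup G) = N := by
    have hreldvd : N.relIndex (S' : Subgroup G) ∣ N.index :=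
      Subgroup.relIndex_dvd_index_of_le hS'
    have hpnrel : ¬ p ∣ N.relIndex (S' : Subgroup G) := fun hd => hindex (hd.trans hreldvd)
    have hd2 : N.relIndex (S' : Subgroup G) ∣ Nat.card (S' : Subgroup G) :=
      ⟨_, (Subgroup.index_mul_card (N.subgroupOf (S' : Subgroup G))).symm⟩
    obtain ⟨l, hl⟩ := IsPGroup.iff_card.mp S'.2
    rw [hl] at hd2
    obtain ⟨i, _, hieq⟩ := (Nat.dvd_prime_pow hp).mp hd2
    have hi0 : i = 0 := by
      by_contra hi
      exact hpnrel (hieq ▸ dvd_pow_self p hi)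
    have hone : N.relIndex (S' : Subgroup G) = 1 := by rw [hieq, hi0, pow_zero]
    exact le_antisymm (Subgroup.relIndex_eq_one.mp hone) hS'
  rw [heq]
  exact hN_norm
end

section
/- Let A and B be msp-permutable subgroups of a finite group G with G = AB, and let N be a normal subgroup of G. Then G/N = (AN/N)(BN/N) is the product of the msp-permutable subgroups AN/N and BN/N of G/N. -/
open Subgroup Pointwise

universe u

/-- Every Sylow `p`-subgroup of `AN/N` is the image of a Sylow `p`-subgroup of `A`. -/
lemma sylow_lift_of_quotient {G : Type*} [Group G] [Finite G] (N : Subgroup G) [N.Normal]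
    (A : Subgroup G) (p : ℕ) (hp : p.Prime) (P' : Subgroup (G ⧸ N))
    (h : IsSylowSubgroupOf p P' (A.map (QuotientGroup.mk' N))) :
    ∃ P : Subgroup G, IsSylowSubgroupOf p P A ∧ P.map (QuotientGroup.mk' N) = P' := by
  haveI : Fact p.Prime := ⟨hp⟩
  set f := QuotientGroup.mk' N with hf
  obtain ⟨hle, hpP', hcop⟩ := h
  set P₀ : Subgroup G := A ⊓ comap f P' with hP₀
  have hmapP₀ : P₀.map f = P' := by
    apply le_antisymm
    · rintro y ⟨x, ⟨-, hx2⟩, rfl⟩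
      exact hx2
    · intro y hy
      obtain ⟨a, ha, rfl⟩ := hle hy
      exact ⟨a, ⟨ha, hy⟩, rfl⟩
  obtain ⟨S⟩ : Nonempty (Sylow p ↥P₀) := Sylow.nonempty
  set P : Subgroup G := (S : Subgroup ↥P₀).map P₀.subtype with hP
  have hPle : P ≤ P₀ := map_subtype_le _
  have hPgrp : IsPGroup p P := S.2.map _
  have hrelPP₀ : (S : Subgroup ↥P₀).index = P.relIndex P₀ := by
    rw [relIndex, subgroupOf, comap_map_eq_self_of_injective (subtype_injective P₀)]
  have hcopP : Nat.Coprime p (P.relIndex P₀) := by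
    rw [← hrelPP₀]
    exact (Nat.Prime.coprime_iff_not_dvd hp).mpr S.not_dvd_index
  have hMrel : N.relIndex P₀ = Nat.card P' := by
    have hN : N = comap f ⊥ := by simp [hf, QuotientGroup.ker_mk']
    have h' := relIndex_comap (H := (⊥ : Subgroup (G ⧸ N))) f P₀
    rw [← hN, hmapP₀, relIndex_bot_left] at h'
    exact h'
  obtain ⟨k, hk⟩ := IsPGroup.exists_card_eq hpP'
  have hsup : P₀ ≤ P ⊔ (N ⊓ P₀) := by
    rw [← relIndex_eq_one]
    have h1 : (P ⊔ (N ⊓ P₀)).relIndex P₀ ∣ (N ⊓ P₀).relIndex P₀ :=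
      relIndex_dvd_of_le_left _ le_sup_right
    rw [inf_relIndex_right, hMrel, hk] at h1
    have h2 : (P ⊔ (N ⊓ P₀)).relIndex P₀ ∣ P.relIndex P₀ :=
      relIndex_dvd_of_le_left _ le_sup_left
    have h3 : Nat.Coprime ((P ⊔ (N ⊓ P₀)).relIndex P₀) (p ^ k) :=
      ((hcopP.coprime_dvd_right h2).symm).pow_right _
    exact h3.eq_one_of_dvd h1
  have hmapP : P.map f = P' := by
    apply le_antisymm
    · rw [← hmapP₀]; exact map_mono hPle
    · rw [← hmapP₀]
      calc P₀.map f ≤ (P ⊔ (N ⊓ P₀)).map f := map_mono hsup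
        _ = P.map f ⊔ (N ⊓ P₀).map f := by rw [Subgroup.map_sup]
        _ ≤ P.map f ⊔ ⊥ := by
            refine sup_le_sup_left ?_ _
            intro y hy
            obtain ⟨x, hx, rfl⟩ := hy
            simpa [hf] using (QuotientGroup.eq_one_iff x).mpr hx.1
        _ = P.map f := sup_bot_eq _
  refine ⟨P, ⟨hPle.trans inf_le_left, hPgrp, ?_⟩, hmapP⟩
  rw [← relIndex_mul_relIndex P P₀ A hPle inf_le_left]
  refine Nat.Coprime.mul_right hcopP ?_
  have : P₀.relIndex A = P'.relIndex (A.map f) := by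
    rw [hP₀, inf_comm, inf_relIndex_right, relIndex_comap]
  rw [this]
  exact hcop

/-- If `G = AB` with `A`, `B` msp-permutable and `N ⊴ G`, then
`G/N = (AN/N)(BN/N)` is the product of the msp-permutable subgroups `AN/N`, `BN/N`. -/
theorem msp_permutable_quotient {G : Type u} [Group G] [Finite G]
    (A B : Subgroup G) (h : MspPermutable A B)
    (hG : (A : Set G) * (B : Set G) = Set.univ)
    (N : Subgroup G) [N.Normal] :
    ((A.map (QuotientGroup.mk' N) : Set (G ⧸ N)) *
        (B.map (QuotientGroup.mk' N) : Set (G ⧸ N)) = Set.univ) ∧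
    MspPermutable (A.map (QuotientGroup.mk' N)) (B.map (QuotientGroup.mk' N)) := by
  set f := QuotientGroup.mk' N with hf
  have hsurj : Function.Surjective f := QuotientGroup.mk'_surjective N
  have himg : ∀ S : Subgroup G, ((S.map f : Subgroup (G ⧸ N)) : Set (G ⧸ N)) = f '' S := by
    intro S; rfl
  have hprod : ((A.map f : Subgroup (G ⧸ N)) : Set (G ⧸ N)) *
      ((B.map f : Subgroup (G ⧸ N)) : Set (G ⧸ N)) = Set.univ := by
    rw [himg, himg, ← Set.image_mul, hG, Set.image_univ, Set.range_eq_univ.mpr hsurj]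
  refine ⟨hprod, ⟨⊤, by rw [hprod]; rfl⟩, ?_⟩
  intro p q hp hq hpq P' Q' hP' hQ'
  obtain ⟨P, hPA, hPmap⟩ := sylow_lift_of_quotient N A p hp P' hP'
  obtain ⟨Q, hQB, hQmap⟩ := sylow_lift_of_quotient N B q hq Q' hQ'
  have hmp := h.2 p q hp hq hpq P Q hPA hQB
  constructor
  · intro U hU
    set U' : Subgroup G := comap f U ⊓ P with hU'
    have hUmap : U'.map f = U := by
      apply le_antisymm
      · rintro y ⟨x, ⟨hx1, -⟩, rfl⟩
        exact hx1
      · intro y hy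
        rw [← hPmap] at hU
        obtain ⟨x, hx, rfl⟩ := hU hy
        exact ⟨x, ⟨hy, hx⟩, rfl⟩
    calc (U : Set (G ⧸ N)) * (Q' : Set (G ⧸ N))
        = f '' U' * (f '' Q) := by rw [← hUmap, ← hQmap, himg, himg]
      _ = f '' ((U' : Set G) * Q) := (Set.image_mul f).symm
      _ = f '' ((Q : Set G) * U') := by rw [hmp.1 U' inf_le_right]
      _ = (f '' Q) * (f '' U') := Set.image_mul f
      _ = (Q' : Set (G ⧸ N)) * (U : Set (G ⧸ N)) := by rw [← hUmap, ← hQmap, himg, himg]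
  · intro V hV
    set V' : Subgroup G := comap f V ⊓ Q with hV'
    have hVmap : V'.map f = V := by
      apply le_antisymm
      · rintro y ⟨x, ⟨hx1, -⟩, rfl⟩
        exact hx1
      · intro y hy
        rw [← hQmap] at hV
        obtain ⟨x, hx, rfl⟩ := hV hy
        exact ⟨x, ⟨hy, hx⟩, rfl⟩
    calc (P' : Set (G ⧸ N)) * (V : Set (G ⧸ N))
        = f '' P * (f '' V') := by rw [← hVmap, ← hPmap, himg, himg]
      _ = f '' ((P : Set G) * V') := (Set.image_mul f).symm
      _ = f '' ((V' : Set G) * P) := by rw [hmp.2 V' inf_le_right]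
      _ = (f '' V') * (f '' P) := Set.image_mul f
      _ = (V : Set (G ⧸ N)) * (P' : Set (G ⧸ N)) := by rw [← hVmap, ← hPmap, himg, himg]
end

section
/- Let A and B be msp-permutable subgroups of a finite group G with G = AB, and let H be a subgroup of G with A ≤ H ≤ G. Then H = A(H ∩ B) and A and H ∩ B are msp-permutable subgroups of H. -/
open Subgroup Pointwise

universe u

/-- If two subgroups permute (as sets), their set product is the carrier of a subgroup. -/
lemma exists_subgroup_of_mul_comm {G : Type*} [Group G] (X Y : Subgroup G)
    (hc : (X : Set G) * (Y : Set G) = (Y : Set G) * (X : Set G)) :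
    ∃ K : Subgroup G, (K : Set G) = (X : Set G) * (Y : Set G) := by
  refine ⟨{ carrier := (X : Set G) * (Y : Set G)
            one_mem' := ⟨1, X.one_mem, 1, Y.one_mem, one_mul 1⟩
            mul_mem' := ?_
            inv_mem' := ?_ }, rfl⟩
  · rintro a b ⟨x, hx, y, hy, rfl⟩ ⟨x', hx', y', hy', rfl⟩
    have hmem : y * x' ∈ (Y : Set G) * (X : Set G) := ⟨y, hy, x', hx', rfl⟩
    rw [← hc] at hmem
    obtain ⟨x'', hx'', y'', hy'', hxy⟩ := hmem
    refine ⟨x * x'', X.mul_mem hx hx'', y'' * y', Y.mul_mem hy'' hy', ?_⟩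
    calc x * x'' * (y'' * y') = x * (x'' * y'') * y' := by group
      _ = x * (y * x') * y' := by
            have hxy' : x'' * y'' = y * x' := hxy
            rw [hxy']
      _ = x * y * (x' * y') := by group
  · rintro a ⟨x, hx, y, hy, rfl⟩
    have hmem : y⁻¹ * x⁻¹ ∈ (Y : Set G) * (X : Set G) :=
      ⟨y⁻¹, Y.inv_mem hy, x⁻¹, X.inv_mem hx, rfl⟩
    rw [← hc] at hmem
    simpa [mul_inv_rev] using hmem

/-- If `G = AB` with `A`, `B` msp-permutable and `A ≤ H ≤ G`, then `H = A(H ∩ B)` is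
the product of the msp-permutable subgroups `A` and `H ∩ B`. -/
theorem msp_permutable_intermediate {G : Type u} [Group G] [Finite G]
    (A B : Subgroup G) (h : MspPermutable A B)
    (hG : (A : Set G) * (B : Set G) = Set.univ)
    (H : Subgroup G) (hAH : A ≤ H) :
    (A : Set G) * ((H ⊓ B : Subgroup G) : Set G) = (H : Set G) ∧
    MspPermutable A (H ⊓ B) := by
  -- Part 1 : the Dedekind modular law.
  have h1 : (A : Set G) * ((H ⊓ B : Subgroup G) : Set G) = (H : Set G) := by
    apply Set.Subset.antisymm
    · rintro x ⟨a, ha, b, hb, rfl⟩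
      exact H.mul_mem (hAH ha) hb.1
    · intro x hx
      have hxu : x ∈ (A : Set G) * (B : Set G) := by rw [hG]; trivial
      obtain ⟨a, ha, b, hb, rfl⟩ := hxu
      have hbH : b ∈ H := by
        have := H.mul_mem (H.inv_mem (hAH ha)) hx
        simpa using this
      exact ⟨a, ha, b, ⟨hbH, hb⟩, rfl⟩
  refine ⟨h1, ⟨H, h1.symm⟩, ?_⟩
  intro p q hp hq hpq P Q hP hQ
  haveI := Fact.mk hq
  obtain ⟨hQle, hQpg, hQcop⟩ := hQ
  have hQB : Q ≤ B := hQle.trans inf_le_right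
  have hQH : Q ≤ H := hQle.trans inf_le_left
  -- extend Q to a Sylow q-subgroup Q₁ of B
  have hQpgB : IsPGroup q (Q.subgroupOf B) := hQpg.comap_subtype
  obtain ⟨S, hS⟩ := hQpgB.exists_le_sylow
  set Q₁ : Subgroup G := (S : Subgroup B).map B.subtype with hQ₁def
  have hQ₁B : Q₁ ≤ B := map_subtype_le _
  have hQQ₁ : Q ≤ Q₁ := by
    have hmono := Subgroup.map_mono (f := B.subtype) hS
    rwa [Subgroup.subgroupOf_map_subtype, inf_eq_left.mpr hQB] at hmono
  have hQ₁pg : IsPGroup q Q₁ := S.2.map _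
  have hrel : Q₁.relIndex B = (S : Subgroup B).index := by
    show ((((S : Subgroup B).map B.subtype)).subgroupOf B).index = (S : Subgroup B).index
    rw [Subgroup.subgroupOf, Subgroup.comap_map_eq_self_of_injective B.subtype_injective]
  have hnd : ¬ q ∣ (S : Subgroup B).index := S.not_dvd_index
  have hQ₁cop : Nat.Coprime q (Q₁.relIndex B) :=
    (hq.coprime_iff_not_dvd).mpr (by rw [hrel]; exact hnd)
  have hQ₁syl : IsSylowSubgroupOf q Q₁ B := ⟨hQ₁B, hQ₁pg, hQ₁cop⟩
  -- Q₁ ⊓ H = Q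
  have hle1 : Q ≤ Q₁ ⊓ H := le_inf hQQ₁ hQH
  have hQ1H : Q₁ ⊓ H = Q := by
    refine le_antisymm ?_ hle1
    have hle2 : Q₁ ⊓ H ≤ H ⊓ B := le_inf inf_le_right (inf_le_left.trans hQ₁B)
    have hpg2 : IsPGroup q ↥(Q₁ ⊓ H) := hQ₁pg.to_le inf_le_left
    obtain ⟨n, hn⟩ := IsPGroup.iff_card.mp hpg2
    have hdvd : Q.relIndex (Q₁ ⊓ H) ∣ Q.relIndex (H ⊓ B) :=
      ⟨(Q₁ ⊓ H).relIndex (H ⊓ B), (Subgroup.relIndex_mul_relIndex Q (Q₁ ⊓ H) (H ⊓ B) hle1 hle2).symm⟩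
    have hdvd2 : Q.relIndex (Q₁ ⊓ H) ∣ q ^ n := by
      rw [← hn]
      exact Subgroup.index_dvd_card (G := ↥(Q₁ ⊓ H)) (H := Q.subgroupOf (Q₁ ⊓ H))
    have hcop : Nat.Coprime (Q.relIndex (Q₁ ⊓ H)) (q ^ n) :=
      ((Nat.Coprime.coprime_dvd_right hdvd hQcop).symm).pow_right n
    have hone : Q.relIndex (Q₁ ⊓ H) = 1 := hcop.eq_one_of_dvd hdvd2
    exact Subgroup.relIndex_eq_one.mp hone
  -- mutual permutability
  obtain ⟨hmp1, hmp2⟩ := h.2 p q hp hq hpq P Q₁ hP hQ₁syl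
  constructor
  · intro U hU
    have hUH : U ≤ H := hU.trans (hP.1.trans hAH)
    obtain ⟨K, hK⟩ := exists_subgroup_of_mul_comm U Q₁ (hmp1 U hU)
    have hset : (U : Set G) * (Q : Set G) = ((K ⊓ H : Subgroup G) : Set G) := by
      ext x
      constructor
      · rintro ⟨u, hu, y, hy, rfl⟩
        refine ⟨?_, H.mul_mem (hUH hu) (hQH hy)⟩
        show u * y ∈ (K : Set G)
        rw [hK]
        exact ⟨u, hu, y, hQQ₁ hy, rfl⟩
      · rintro ⟨hxK, hxH⟩
        have : x ∈ (U : Set G) * (Q₁ : Set G) := by rw [← hK]; exact hxK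
        obtain ⟨u, hu, y, hy, rfl⟩ := this
        have hyH : y ∈ H := by
          have := H.mul_mem (H.inv_mem (hUH hu)) hxH
          simpa using this
        have hyQ : y ∈ Q := by rw [← hQ1H]; exact ⟨hy, hyH⟩
        exact ⟨u, hu, y, hyQ, rfl⟩
    have hinv : (Q : Set G) * (U : Set G) = ((U : Set G) * (Q : Set G))⁻¹ := by
      rw [mul_inv_rev, inv_coe_set, inv_coe_set]
    rw [hinv, hset, inv_coe_set]
  · intro V hV
    exact hmp2 V (hV.trans hQQ₁)
end

section
/- Let G = G₁G₂ be the product of msp-permutable subgroups G₁ and G₂ of a finite group G. If a Sylow p-subgroup P of G is normal in G and abelian, then P ∩ G_i is normal in G for each i ∈ {1,2}. -/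
open Subgroup Pointwise

universe u

section
variable {G : Type u} [Group G] [Finite G]

/-- trivial intersection of a p-group element and q-group element. -/
lemma eq_one_of_pq {p q : ℕ} (hp : p.Prime) (hq : q.Prime) (hpq : p ≠ q)
    {c : G} (hc : ∃ n, c ^ p ^ n = 1) (hc' : ∃ m, c ^ q ^ m = 1) : c = 1 := by
  obtain ⟨n, hn⟩ := hc
  obtain ⟨m, hm⟩ := hc'
  have h1 : orderOf c ∣ p ^ n := orderOf_dvd_of_pow_eq_one hn
  have h2 : orderOf c ∣ q ^ m := orderOf_dvd_of_pow_eq_one hm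
  have hco : Nat.Coprime (p ^ n) (q ^ m) :=
    ((Nat.coprime_primes hp hq).mpr hpq).pow n m
  have := Nat.eq_one_of_dvd_coprimes hco h1 h2
  exact orderOf_eq_one_iff.mp this

lemma q_group_normalizes {p q : ℕ} (hp : p.Prime) (hq : q.Prime) (hpq : p ≠ q)
    (P : Sylow p G) (hnorm : (P : Subgroup G).Normal)
    (X Q : Subgroup G) (hX : X ≤ (P : Subgroup G)) (hQ : IsPGroup q Q)
    (hmp : MutuallyPermutable X Q) : Q ≤ Subgroup.normalizer (X : Set G) := by
  have conj : ∀ x ∈ Q, ∀ h ∈ X, x * h * x⁻¹ ∈ X := by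
    intro x hx h hh
    have hset : (X : Set G) * (Q : Set G) = (Q : Set G) * (X : Set G) := hmp.1 X le_rfl
    have h1 : x * h ∈ (X : Set G) * (Q : Set G) := by
      rw [hset]; exact Set.mul_mem_mul hx hh
    obtain ⟨a, ha, b, hb, hab⟩ := h1
    have hab' : a * b = x * h := hab
    have key : x * h * x⁻¹ = a * (b * x⁻¹) := by rw [← mul_assoc, hab']
    have hbx : b * x⁻¹ ∈ Q := mul_mem hb (inv_mem hx)
    have hP : x * h * x⁻¹ ∈ (P : Subgroup G) := hnorm.conj_mem h (hX hh) x
    have hc : b * x⁻¹ ∈ (P : Subgroup G) := by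
      have : b * x⁻¹ = a⁻¹ * (x * h * x⁻¹) := by rw [key]; group
      rw [this]
      exact mul_mem (inv_mem (hX ha)) hP
    have hc1 : b * x⁻¹ = 1 := by
      refine eq_one_of_pq hp hq hpq ?_ ?_
      · obtain ⟨n, hn⟩ := P.2 ⟨_, hc⟩
        exact ⟨n, by simpa using Subtype.ext_iff.mp hn⟩
      · obtain ⟨n, hn⟩ := hQ ⟨_, hbx⟩
        exact ⟨n, by simpa using Subtype.ext_iff.mp hn⟩
    rw [key, hc1, mul_one]
    exact ha
  intro x hx
  rw [Subgroup.mem_normalizer_iff]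
  intro h
  constructor
  · intro hh; exact conj x hx h hh
  · intro hh
    have := conj x⁻¹ (inv_mem hx) _ hh
    simpa [mul_assoc] using this

end
section
variable {G : Type u} [Group G] [Finite G]

set_option linter.unusedSectionVars false

lemma mem_sylow_of_prime_pow {p : ℕ} (hp : p.Prime) (P : Sylow p G)
    (hnorm : (P : Subgroup G).Normal) {x : G} (hx : ∃ n, x ^ p ^ n = 1) :
    x ∈ (P : Subgroup G) := by
  haveI := Fact.mk hp
  obtain ⟨n, hn⟩ := hx
  have hpg : IsPGroup p (Subgroup.zpowers x) := by
    intro g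
    refine ⟨n, ?_⟩
    obtain ⟨i, hi⟩ := g.2
    apply Subtype.ext
    push_cast
    simp only at hi
    rw [← hi, ← zpow_natCast (x ^ i) (p ^ n), ← zpow_mul, mul_comm, zpow_mul,
      zpow_natCast, hn, one_zpow]
  obtain ⟨Q, hQ⟩ := hpg.exists_le_sylow
  haveI : P.Normal := hnorm
  have hQP : Q = P := by
    obtain ⟨g, hg⟩ := MulAction.exists_smul_eq G P Q
    rw [← hg, Sylow.smul_eq_of_normal]
  rw [← hQP]
  exact hQ (Subgroup.mem_zpowers x)

lemma le_of_prime_pow_elements (H N : Subgroup G)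
    (hstep : ∀ q : ℕ, q.Prime → ∀ x ∈ H, (∃ n, x ^ q ^ n = 1) → x ∈ N) : H ≤ N := by
  have key : ∀ n : ℕ, ∀ x : G, x ∈ H → orderOf x ≤ n → x ∈ N := by
    intro n
    induction n using Nat.strong_induction_on with
    | _ n ih =>
      intro x hx hord
      by_cases h1 : orderOf x = 1
      · rw [orderOf_eq_one_iff] at h1
        rw [h1]; exact N.one_mem
      set m := orderOf x with hm
      have hmpos : 0 < m := orderOf_pos x
      have hm1 : 1 < m := lt_of_le_of_ne hmpos (Ne.symm h1)
      set q := m.minFac with hqdef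
      have hq : q.Prime := Nat.minFac_prime (by omega)
      have hqm : q ∣ m := Nat.minFac_dvd m
      set a := q ^ m.factorization q with ha
      set b := m / a with hb
      have hab : a * b = m := Nat.ordProj_mul_ordCompl_eq_self m q
      have hcop : Nat.Coprime a b := (Nat.coprime_ordCompl hq hmpos.ne').pow_left _
      have hbpos : 0 < b := Nat.ordCompl_pos q hmpos.ne'
      have ha1 : 1 < a := by
        have hfpos := (Nat.Prime.factorization_pos_of_dvd hq hmpos.ne' hqm)
        exact Nat.one_lt_pow (by omega) hq.one_lt
      have hbm : b < m := Nat.div_lt_self hmpos ha1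
      by_cases hb1 : b = 1
      · refine hstep q hq x hx ⟨m.factorization q, ?_⟩
        rw [← ha]
        have ham : a = m := by rw [← hab, hb1, mul_one]
        rw [ham, hm]
        exact pow_orderOf_eq_one x
      · obtain ⟨u, -, hu⟩ := Nat.exists_mul_mod_eq_one_of_coprime hcop
          (lt_of_le_of_ne hbpos (Ne.symm hb1))
        set t := a * u / b with ht
        have haut : a * u = b * t + 1 := by
          have hdm := Nat.div_add_mod (a * u) b
          rw [hu] at hdm
          rw [ht]
          omega
        set z := x ^ (a * u) with hz
        set y := x * z⁻¹ with hy
        have hyz : x = y * z := by rw [hy]; group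
        have hzb : z ^ b = 1 := by
          have hmu : a * u * b = m * u := by rw [← hab]; ring
          rw [hz, ← pow_mul, hmu, hm, pow_mul, pow_orderOf_eq_one, one_pow]
        have hya : y ^ a = 1 := by
          have h2 : z ^ a = x ^ a := by
            rw [hz, ← pow_mul]
            have h3 : a * u * a = m * t + a := by rw [haut, ← hab]; ring
            rw [h3, pow_add, hm, pow_mul, pow_orderOf_eq_one, one_pow, one_mul]
          have hcomm : Commute x z⁻¹ := (Commute.pow_right (Commute.refl x) _).inv_right
          rw [hy, hcomm.mul_pow, inv_pow, h2]
          group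
        have hyN : y ∈ N := by
          refine hstep q hq y ?_ ⟨m.factorization q, by rw [← ha]; exact hya⟩
          rw [hy, hz]
          exact mul_mem hx (inv_mem (pow_mem hx _))
        have hzN : z ∈ N := by
          refine ih b (lt_of_lt_of_le hbm hord) z (pow_mem hx _) ?_
          exact Nat.le_of_dvd hbpos (orderOf_dvd_of_pow_eq_one hzb)
        rw [hyz]; exact mul_mem hyN hzN
  intro x hx
  exact key (orderOf x) x hx le_rfl

end
section
variable {G : Type u} [Group G] [Finite G]

set_option linter.unusedSectionVars false

lemma exists_sylow_of_prime_pow {q : ℕ} (hq : q.Prime) (B : Subgroup G) {x : G}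
    (hxB : x ∈ B) (hx : ∃ n, x ^ q ^ n = 1) :
    ∃ Q : Subgroup G, IsSylowSubgroupOf q Q B ∧ x ∈ Q := by
  haveI := Fact.mk hq
  obtain ⟨n, hn⟩ := hx
  set x' : B := ⟨x, hxB⟩ with hx'
  have hn' : x' ^ q ^ n = 1 := by
    apply Subtype.ext
    push_cast
    exact hn
  have hpg : IsPGroup q (Subgroup.zpowers x') := by
    intro g
    refine ⟨n, ?_⟩
    obtain ⟨i, hi⟩ := g.2
    apply Subtype.ext
    push_cast
    simp only at hi
    rw [← hi, ← zpow_natCast (x' ^ i) (q ^ n), ← zpow_mul, mul_comm, zpow_mul,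
      zpow_natCast, hn', one_zpow]
  obtain ⟨S, hS⟩ := hpg.exists_le_sylow
  refine ⟨(S : Subgroup B).map B.subtype, ⟨?_, ?_, ?_⟩, ?_⟩
  · exact Subgroup.map_subtype_le _
  · exact IsPGroup.map S.2 _
  · have hcm : ((S : Subgroup B).map B.subtype).subgroupOf B = (S : Subgroup B) := by
      rw [Subgroup.subgroupOf]
      exact Subgroup.comap_map_eq_self_of_injective B.subtype_injective _
    rw [Subgroup.relIndex, hcm]
    have hnd : ¬ q ∣ (S : Subgroup B).index := S.not_dvd_index
    exact hq.coprime_iff_not_dvd.mpr hnd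
  · exact ⟨x', hS (Subgroup.mem_zpowers x'), rfl⟩

end
section
variable {G : Type u} [Group G] [Finite G]

set_option linter.unusedSectionVars false

lemma MutuallyPermutable.symm' {X Y : Subgroup G} (h : MutuallyPermutable X Y) :
    MutuallyPermutable Y X :=
  ⟨fun U hU => (h.2 U hU).symm, fun V hV => (h.1 V hV).symm⟩

lemma component_normal {p : ℕ} (hp : p.Prime) (P : Sylow p G)
    (hnorm : (P : Subgroup G).Normal)
    (habel : ∀ x ∈ (P : Subgroup G), ∀ y ∈ (P : Subgroup G), x * y = y * x)
    (A B : Subgroup G) (hsup : A ⊔ B = ⊤)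
    (hperm : ∀ q : ℕ, q.Prime → q ≠ p → ∀ Q : Subgroup G, IsSylowSubgroupOf q Q B →
      MutuallyPermutable ((P : Subgroup G) ⊓ A) Q) :
    ((P : Subgroup G) ⊓ A).Normal := by
  set X := (P : Subgroup G) ⊓ A with hX
  rw [← Subgroup.normalizer_eq_top_iff]
  rw [eq_top_iff, ← hsup]
  have hXP : X ≤ (P : Subgroup G) := inf_le_left
  refine sup_le ?_ ?_
  · -- A normalizes X
    intro a ha
    rw [Subgroup.mem_normalizer_iff]
    have conj : ∀ a ∈ A, ∀ h ∈ X, a * h * a⁻¹ ∈ X := by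
      intro a ha h hh
      refine Subgroup.mem_inf.mpr ⟨hnorm.conj_mem h (hXP hh) a, ?_⟩
      exact A.mul_mem (A.mul_mem ha (Subgroup.mem_inf.mp hh).2) (A.inv_mem ha)
    intro h
    constructor
    · intro hh; exact conj a ha h hh
    · intro hh
      have := conj a⁻¹ (inv_mem ha) _ hh
      simpa [mul_assoc] using this
  · -- B normalizes X
    apply le_of_prime_pow_elements
    intro q hq x hxB hpow
    by_cases hqp : q = p
    · subst hqp
      have hxP : x ∈ (P : Subgroup G) := mem_sylow_of_prime_pow hq P hnorm hpow
      rw [Subgroup.mem_normalizer_iff]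
      intro h
      have : ∀ h ∈ X, x * h * x⁻¹ = h := by
        intro h hh
        rw [habel x hxP h (hXP hh), mul_assoc, mul_inv_cancel, mul_one]
      constructor
      · intro hh; rw [this h hh]; exact hh
      · intro hh
        have hcomm := habel x hxP _ (hXP hh)
        have h2 : h = x⁻¹ * (x * h * x⁻¹) * x := by group
        rw [h2, mul_assoc x⁻¹ (x * h * x⁻¹) x, ← hcomm, ← mul_assoc, inv_mul_cancel, one_mul]
        exact hh
    · obtain ⟨Q, hQs, hxQ⟩ := exists_sylow_of_prime_pow hq B hxB hpow
      exact q_group_normalizes hp hq (fun e => hqp e.symm) P hnorm X Q hXP hQs.2.1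
        (hperm q hq hqp Q hQs) hxQ

end
section
variable {G : Type u} [Group G] [Finite G]

set_option linter.unusedSectionVars false

lemma isSylow_inf' {p : ℕ} (hp : p.Prime) (P : Sylow p G)
    (hnorm : (P : Subgroup G).Normal) (A : Subgroup G) :
    IsSylowSubgroupOf p ((P : Subgroup G) ⊓ A) A := by
  haveI := Fact.mk hp
  haveI := hnorm
  refine ⟨inf_le_right, IsPGroup.to_inf_left P.2, ?_⟩
  rw [inf_relIndex_right]
  have hdvd : (P : Subgroup G).relIndex A ∣ (P : Subgroup G).index :=
    Subgroup.relIndex_dvd_index_of_normal (P : Subgroup G) A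
  have hnd : ¬ p ∣ (P : Subgroup G).index := P.not_dvd_index
  exact hp.coprime_iff_not_dvd.mpr fun hd => hnd (hd.trans hdvd)

end

/-- If `G = G₁G₂` with `G₁`, `G₂` msp-permutable and a Sylow `p`-subgroup `P` of `G` is
normal and abelian, then `P ⊓ Gᵢ` is normal in `G` for `i ∈ {1, 2}`. -/
theorem inf_normal_of_msp_permutable_product {G : Type u} [Group G] [Finite G]
    (G₁ G₂ : Subgroup G) (h : MspPermutable G₁ G₂)
    (hG : (G₁ : Set G) * (G₂ : Set G) = Set.univ)
    (p : ℕ) (hp : p.Prime) (P : Sylow p G) (hnorm : (P : Subgroup G).Normal)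
    (habel : ∀ x ∈ (P : Subgroup G), ∀ y ∈ (P : Subgroup G), x * y = y * x) :
    ((P : Subgroup G) ⊓ G₁).Normal ∧ ((P : Subgroup G) ⊓ G₂).Normal := by
  have hsup : G₁ ⊔ G₂ = ⊤ := by
    rw [eq_top_iff]
    intro g _
    have hg : g ∈ (G₁ : Set G) * (G₂ : Set G) := by rw [hG]; trivial
    obtain ⟨a, ha, b, hb, rfl⟩ := hg
    exact mul_mem ((le_sup_left : G₁ ≤ G₁ ⊔ G₂) ha) ((le_sup_right : G₂ ≤ G₁ ⊔ G₂) hb)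
  constructor
  · refine component_normal hp P hnorm habel G₁ G₂ hsup ?_
    intro q hq hqp Q hQ
    exact h.2 p q hp hq (fun e => hqp e.symm) _ Q (isSylow_inf' hp P hnorm G₁) hQ
  · refine component_normal hp P hnorm habel G₂ G₁ (by rw [sup_comm]; exact hsup) ?_
    intro q hq hqp Q hQ
    exact (h.2 q p hq hp hqp Q _ hQ (isSylow_inf' hp P hnorm G₂)).symm'
end

section
/- Let G = P ⋊ M be a primitive soluble finite group, where M is a primitivator of G and P is a Sylow p-subgroup of G. Let A and B be subgroups of M with M = AB. If B ≤ N_G(X) for every subgroup X of P, then B is a cyclic group whose order divides p − 1. -/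
open Subgroup Pointwise

universe u

/-- Let `G = P ⋊ M` be a primitive soluble group, `M` a primitivator of `G` and `P` a
Sylow `p`-subgroup of `G`. If `M = AB` and `B` normalizes every subgroup of `P`,
then `B` is cyclic of order dividing `p - 1`. -/
theorem cyclic_of_normalizes_sylow {G : Type u} [Group G] [Finite G]
    (hsol : IsSolvable G)
    (M : Subgroup G) (hmax : IsCoatom M) (hcore : M.normalCore = ⊥)
    (p : ℕ) (hp : p.Prime) (P : Subgroup G)
    (hsyl : IsSylowSubgroupOf p P ⊤) (hPnorm : P.Normal)
    (hPM1 : P ⊓ M = ⊥) (hPM2 : P ⊔ M = ⊤)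
    (A B : Subgroup G) (hA : A ≤ M) (hB : B ≤ M)
    (hM : (A : Set G) * (B : Set G) = (M : Set G))
    (hnormz : ∀ X : Subgroup G, X ≤ P → B ≤ normalizer (X : Set G)) :
    IsCyclic B ∧ Nat.card B ∣ p - 1 := by
  classical
  haveI : Fact p.Prime := ⟨hp⟩
  haveI : NeZero p := ⟨hp.ne_zero⟩
  -- conjugation of powers
  have hconj : ∀ (g x : G) (j : ℤ), g * x ^ j * g⁻¹ = (g * x * g⁻¹) ^ j := by
    intro g x j
    simpa using (map_zpow (MulAut.conj g) x j).symm
  -- P is nontrivial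
  have hPne : P ≠ ⊥ := by
    rintro rfl
    rw [bot_sup_eq] at hPM2
    exact hmax.1 hPM2
  obtain ⟨a, haP, ha1⟩ : ∃ a ∈ P, a ≠ (1 : G) := by
    by_contra h
    push_neg at h
    exact hPne (Subgroup.eq_bot_iff_forall P |>.mpr h)
  -- normal subgroups contained in M are trivial
  have hcoreN : ∀ N : Subgroup G, N.Normal → N ≤ M → N = ⊥ := by
    intro N hN hNM
    haveI := hN
    have h1 : N ≤ M.normalCore := Subgroup.normal_le_normalCore.mpr hNM
    rw [hcore] at h1
    exact le_bot_iff.mp h1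
  -- minimality of P
  have hmin : ∀ N : Subgroup G, N.Normal → N ≤ P → N ≠ ⊥ → N = P := by
    intro N hN hNP hNbot
    haveI := hN
    have hNM : ¬N ≤ M := fun h => hNbot (hcoreN N hN h)
    have hlt : M < N ⊔ M :=
      lt_of_le_of_ne le_sup_right (fun h => hNM (le_sup_left.trans h.ge))
    have hsup : N ⊔ M = ⊤ := hmax.2 _ hlt
    refine le_antisymm hNP ?_
    intro x hx
    have hxT : x ∈ N ⊔ M := by rw [hsup]; exact Subgroup.mem_top x
    have hxm : x ∈ (↑N * ↑M : Set G) := by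
      rw [← Subgroup.normal_mul]; exact hxT
    obtain ⟨n, hn, m, hm, hnm0⟩ := hxm
    have hnm : n * m = x := hnm0
    have hmP : m ∈ P := by
      have hmx : m = n⁻¹ * x := by rw [← hnm]; group
      rw [hmx]; exact P.mul_mem (P.inv_mem (hNP hn)) hx
    have hmb : m ∈ P ⊓ M := ⟨hmP, hm⟩
    rw [hPM1, Subgroup.mem_bot] at hmb
    rw [hmb, mul_one] at hnm
    rwa [← hnm]
  -- P is abelian
  have hPP : ⁅P, P⁆ ≠ P := by
    intro h
    have hser : ∀ n, P ≤ derivedSeries G n := by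
      intro n
      induction n with
      | zero => exact le_top
      | succ n ih =>
        rw [derivedSeries_succ]
        calc P = ⁅P, P⁆ := h.symm
          _ ≤ _ := Subgroup.commutator_mono ih ih
    exact not_solvable_of_mem_derivedSeries ha1 (fun n => hser n haP) hsol
  have hPPle : ⁅P, P⁆ ≤ P :=
    Subgroup.commutator_le.mpr fun g₁ h₁ g₂ h₂ => by
      exact P.mul_mem (P.mul_mem (P.mul_mem h₁ h₂) (P.inv_mem h₁)) (P.inv_mem h₂)
  have hPPbot : ⁅P, P⁆ = ⊥ := by
    by_contra h
    exact hPP (hmin _ inferInstance hPPle h)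
  have hcomm : ∀ x ∈ P, ∀ y ∈ P, x * y = y * x := by
    have hcen := Subgroup.commutator_eq_bot_iff_le_centralizer.mp hPPbot
    intro x hx y hy
    have hxc := hcen hx
    rw [Subgroup.mem_centralizer_iff] at hxc
    exact (hxc y hy).symm
  -- P has exponent p
  have hexp : ∀ x ∈ P, x ^ p = 1 := by
    have hQmem : ∀ y z : G, (∃ x ∈ P, x ^ p = y) → (∃ x ∈ P, x ^ p = z) →
        ∃ x ∈ P, x ^ p = y * z := by
      rintro _ _ ⟨x, hx, rfl⟩ ⟨w, hw, rfl⟩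
      exact ⟨x * w, P.mul_mem hx hw,
        ((show Commute x w from hcomm x hx w hw).mul_pow p)⟩
    let Q : Subgroup G :=
      { carrier := {y | ∃ x ∈ P, x ^ p = y}
        one_mem' := ⟨1, P.one_mem, one_pow p⟩
        mul_mem' := fun ha hb => hQmem _ _ ha hb
        inv_mem' := by
          rintro y ⟨x, hx, rfl⟩
          exact ⟨x⁻¹, P.inv_mem hx, inv_pow x p⟩ }
    have hQnormal : Q.Normal := by
      constructor
      rintro y ⟨x, hx, rfl⟩ g
      refine ⟨g * x * g⁻¹, hPnorm.conj_mem x hx g, ?_⟩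
      have h9 := hconj g x (p : ℤ)
      simpa [zpow_natCast] using h9.symm
    have hQP : Q ≤ P := by
      rintro y ⟨x, hx, rfl⟩
      exact P.pow_mem hx p
    by_cases hQ : Q = ⊥
    · intro x hx
      have hxQ : x ^ p ∈ Q := ⟨x, hx, rfl⟩
      rwa [hQ, Subgroup.mem_bot] at hxQ
    · exfalso
      have hQeq := hmin Q hQnormal hQP hQ
      have hsurj : Function.Surjective
          (fun x : ↥P => (⟨(x : G) ^ p, P.pow_mem x.2 p⟩ : ↥P)) := by
        rintro ⟨y, hy⟩
        have hyQ : y ∈ Q := by rw [hQeq]; exact hy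
        obtain ⟨x, hx, hxy⟩ := hyQ
        exact ⟨⟨x, hx⟩, Subtype.ext hxy⟩
      have hinj := (Finite.injective_iff_surjective).mpr hsurj
      have hPgrp : IsPGroup p ↥P := hsyl.2.1
      obtain ⟨kk, hkk⟩ := hPgrp ⟨a, haP⟩
      have hex : ∃ n : ℕ, (⟨a, haP⟩ : ↥P) ^ p ^ n = 1 := ⟨kk, hkk⟩
      have hn₀spec := Nat.find_spec hex
      have hn₀pos : Nat.find hex ≠ 0 := by
        intro h0
        rw [h0, pow_zero, pow_one] at hn₀spec
        exact ha1 (by simpa using congrArg Subtype.val hn₀spec)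
      obtain ⟨n₁, hn₁⟩ : ∃ n₁, Nat.find hex = n₁ + 1 :=
        ⟨Nat.find hex - 1, (Nat.succ_pred_eq_of_pos (Nat.pos_of_ne_zero hn₀pos)).symm⟩
      set w : ↥P := (⟨a, haP⟩ : ↥P) ^ p ^ n₁ with hw
      have hwp : w ^ p = 1 := by
        rw [hw, ← pow_mul, ← pow_succ, ← hn₁]
        exact hn₀spec
      have hwne : w ≠ 1 := Nat.find_min hex (by omega)
      apply hwne
      have h1 : (fun x : ↥P => (⟨(x : G) ^ p, P.pow_mem x.2 p⟩ : ↥P)) w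
          = (fun x : ↥P => (⟨(x : G) ^ p, P.pow_mem x.2 p⟩ : ↥P)) 1 := by
        apply Subtype.ext
        simpa using congrArg Subtype.val hwp
      exact hinj h1
  -- the centralizer of P meets M trivially
  have hC : Subgroup.centralizer (P : Set G) ⊓ M = ⊥ := by
    apply hcoreN
    · constructor
      intro c hc g
      obtain ⟨hcC, hcM⟩ := hc
      have hgT : g ∈ (↑P * ↑M : Set G) := by
        rw [← Subgroup.normal_mul, hPM2]; exact Subgroup.mem_top g
      obtain ⟨u, hu, m, hm, rfl⟩ := hgT
      have hc'M : m * c * m⁻¹ ∈ M := M.mul_mem (M.mul_mem hm hcM) (M.inv_mem hm)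
      have hc'C : m * c * m⁻¹ ∈ Subgroup.centralizer (P : Set G) := by
        rw [Subgroup.mem_centralizer_iff]
        intro y hy
        have hy' : m⁻¹ * y * m ∈ P := by
          have h9 := hPnorm.conj_mem y hy m⁻¹
          simpa using h9
        have h8 := (Subgroup.mem_centralizer_iff.mp hcC) _ hy'
        have h2 : y * (m * c * m⁻¹) = m * ((m⁻¹ * y * m) * c) * m⁻¹ := by group
        rw [h2, h8]; group
      have hcomm' : u * (m * c * m⁻¹) * u⁻¹ = m * c * m⁻¹ := by
        have h7 := (Subgroup.mem_centralizer_iff.mp hc'C) u hu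
        rw [h7]; group
      have h6 : (u * m) * c * (u * m)⁻¹ = u * (m * c * m⁻¹) * u⁻¹ := by group
      rw [h6, hcomm']
      exact ⟨hc'C, hc'M⟩
    · exact inf_le_right
  -- a has order p
  have hordera : orderOf a = p := orderOf_eq_prime (hexp a haP) ha1
  -- every element of B acts by a power on each element of P
  have hpow : ∀ b ∈ B, ∀ x ∈ P, ∃ k : ℤ, b * x * b⁻¹ = x ^ k := by
    intro b hb x hx
    have hX := hnormz (Subgroup.zpowers x) (Subgroup.zpowers_le.mpr hx) hb
    have hmem := (Subgroup.mem_normalizer_iff.mp hX x).mp (Subgroup.mem_zpowers x)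
    obtain ⟨k, hk⟩ := Subgroup.mem_zpowers_iff.mp hmem
    exact ⟨k, hk.symm⟩
  -- an element of B fixing a centralizes P
  have hker : ∀ b ∈ B, b * a * b⁻¹ = a → ∀ y ∈ P, b * y * b⁻¹ = y := by
    intro b hb hba y hy
    by_cases hya : y ∈ Subgroup.zpowers a
    · obtain ⟨j, hj⟩ := Subgroup.mem_zpowers_iff.mp hya
      rw [← hj, hconj b a j, hba]
    · have hyp : ∀ t : ℤ, (p : ℤ) ∣ t → y ^ t = 1 := by
        rintro t ⟨s, rfl⟩
        rw [zpow_mul, show (y : G) ^ (p : ℤ) = 1 by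
          rw [zpow_natCast]; exact hexp y hy, one_zpow]
      obtain ⟨n, hn⟩ := hpow b hb y hy
      obtain ⟨m, hm⟩ := hpow b hb (a * y) (P.mul_mem haP hy)
      have hca : Commute a y := hcomm a haP y hy
      have h1 : a * y ^ n = (a * y) ^ m := by
        have hsplit : b * (a * y) * b⁻¹ = (b * a * b⁻¹) * (b * y * b⁻¹) := by group
        rw [← hm, hsplit, hba, hn]
      have h4 : a * y ^ n = a ^ m * y ^ m := h1.trans (hca.mul_zpow m)
      have h5 : a = a ^ m * y ^ (m - n) := by
        rw [sub_eq_add_neg, zpow_add, ← mul_assoc, ← h4, mul_assoc, ← zpow_add]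
        simp
      have h3 : a ^ (1 - m) = y ^ (m - n) := by
        have hcy : Commute (a ^ m) (y ^ (m - n)) := hca.zpow_zpow m (m - n)
        calc a ^ (1 - m) = a * a ^ (-m) := by
              rw [sub_eq_add_neg, zpow_add, zpow_one]
          _ = a ^ m * y ^ (m - n) * a ^ (-m) := by rw [← h5]
          _ = y ^ (m - n) * (a ^ m * a ^ (-m)) := by rw [hcy.eq, mul_assoc]
          _ = y ^ (m - n) := by rw [← zpow_add]; simp
      by_cases hd : (p : ℤ) ∣ (m - n)
      · have hym : y ^ (m - n) = 1 := hyp _ hd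
        have ham : a ^ (1 - m) = 1 := by rw [h3, hym]
        have hpm : (p : ℤ) ∣ (1 - m) := by
          have h2 := zpow_eq_one_iff_modEq.mp ham
          rw [hordera] at h2
          exact Int.modEq_zero_iff_dvd.mp h2
        have hpn : (p : ℤ) ∣ (n - 1) := by
          have h2 : (n - 1 : ℤ) = -((1 - m) + (m - n)) := by ring
          rw [h2]
          exact Dvd.dvd.neg_right (dvd_add hpm hd)
        rw [hn]
        calc y ^ n = y ^ (n - 1 : ℤ) * y ^ (1 : ℤ) := by rw [← zpow_add]; norm_num
          _ = y := by rw [hyp _ hpn, one_mul, zpow_one]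
      · exfalso
        have hgcd : Int.gcd (m - n) p = 1 := by
          have h7 : (Int.gcd (m - n) (p : ℤ) : ℤ) ∣ (p : ℤ) := Int.gcd_dvd_right _ _
          have h8 : Int.gcd (m - n) (p : ℤ) ∣ p := by exact_mod_cast h7
          rcases (Nat.dvd_prime hp).mp h8 with h | h
          · exact h
          · exfalso; apply hd
            have h9 : (Int.gcd (m - n) (p : ℤ) : ℤ) ∣ (m - n) := Int.gcd_dvd_left _ _
            rw [h] at h9; exact_mod_cast h9
        have hbez := Int.gcd_eq_gcd_ab (m - n) (p : ℤ)
        rw [hgcd] at hbez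
        apply hya
        have hy1 : y = (y ^ (m - n)) ^ Int.gcdA (m - n) (p : ℤ) := by
          have h2 : y ^ (1 : ℤ) =
              y ^ ((m - n) * Int.gcdA (m - n) (p : ℤ) + (p : ℤ) * Int.gcdB (m - n) (p : ℤ)) := by
            rw [← hbez]; norm_num
          rw [zpow_one] at h2
          calc y = y ^ ((m - n) * Int.gcdA (m - n) (p : ℤ)
                + (p : ℤ) * Int.gcdB (m - n) (p : ℤ)) := h2
            _ = (y ^ (m - n)) ^ Int.gcdA (m - n) (p : ℤ)
                * ((y : G) ^ (p : ℤ)) ^ Int.gcdB (m - n) (p : ℤ) := by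
                rw [zpow_add, zpow_mul, zpow_mul]
            _ = (y ^ (m - n)) ^ Int.gcdA (m - n) (p : ℤ) := by
                rw [show (y : G) ^ (p : ℤ) = 1 by
                  rw [zpow_natCast]; exact hexp y hy, one_zpow, mul_one]
        rw [hy1, ← h3]
        exact Subgroup.zpow_mem _ (Subgroup.zpow_mem _ (Subgroup.mem_zpowers a) _) _
  -- choose the exponents for the action on a
  have hexists : ∀ b : ↥B, ∃ k : ℤ, (b : G) * a * (b : G)⁻¹ = a ^ k :=
    fun b => hpow b b.2 a haP
  choose k hk using hexists
  have hcast : ∀ s t : ℤ, a ^ s = a ^ t ↔ ((s : ZMod p) = (t : ZMod p)) := by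
    intro s t
    rw [zpow_eq_zpow_iff_modEq, hordera, ZMod.intCast_eq_intCast_iff]
  have hne0 : ∀ b : ↥B, ((k b : ZMod p)) ≠ 0 := by
    intro b h
    have h0 : ((k b : ZMod p)) = ((0 : ℤ) : ZMod p) := by simpa using h
    have h1 : a ^ (k b) = a ^ (0 : ℤ) := (hcast _ _).mpr h0
    rw [zpow_zero] at h1
    have h2 : (b : G) * a * (b : G)⁻¹ = 1 := by rw [hk b, h1]
    apply ha1
    have h3 : a = (b : G)⁻¹ * 1 * (b : G) := by
      rw [← h2]; group
    simpa using h3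
  let F : ↥B →* (ZMod p)ˣ :=
    { toFun := fun b => Units.mk0 ((k b : ZMod p)) (hne0 b)
      map_one' := by
        apply Units.ext
        have h1 : a ^ (k 1) = a ^ (1 : ℤ) := by
          rw [← hk 1]; simp
        have h2 := (hcast _ _).mp h1
        simpa using h2
      map_mul' := by
        intro b c
        apply Units.ext
        have h1 : a ^ (k (b * c)) = a ^ (k c * k b) := by
          rw [← hk (b * c)]
          have hbc : ((b * c : ↥B) : G) = (b : G) * (c : G) := rfl
          rw [hbc]
          have h2 : (b : G) * (c : G) * a * ((b : G) * (c : G))⁻¹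
              = (b : G) * ((c : G) * a * (c : G)⁻¹) * (b : G)⁻¹ := by group
          rw [h2, hk c, hconj, hk b, ← zpow_mul, mul_comm (k b) (k c)]
        have h2 := (hcast _ _).mp h1
        simp only [Units.val_mul, Units.val_mk0]
        rw [h2]
        push_cast
        ring
      }
  have hFinj : Function.Injective F := by
    rw [injective_iff_map_eq_one]
    intro b hb1
    have h0 : ((k b : ZMod p)) = ((1 : ℤ) : ZMod p) := by
      have := congrArg Units.val hb1
      simpa [F] using this
    have hba : (b : G) * a * (b : G)⁻¹ = a := by
      rw [hk b, (hcast _ _).mpr h0, zpow_one]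
    have hcent : (b : G) ∈ Subgroup.centralizer (P : Set G) := by
      rw [Subgroup.mem_centralizer_iff]
      intro y hy
      have h1 := hker b b.2 hba y hy
      calc y * (b : G) = (b : G) * ((b : G)⁻¹ * y * (b : G)) := by group
        _ = (b : G) * y := by
            have h2 : (b : G)⁻¹ * y * (b : G) = y := by
              have h3 : (b : G)⁻¹ ∈ B := B.inv_mem b.2
              have h4 : (b : G)⁻¹ * a * ((b : G)⁻¹)⁻¹ = a := by
                rw [inv_inv]
                have := hba
                calc (b : G)⁻¹ * a * (b : G)
                    = (b : G)⁻¹ * ((b : G) * a * (b : G)⁻¹) * (b : G) := by rw [hba]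
                  _ = a := by group
              have := hker _ h3 h4 y hy
              simpa using this
            rw [h2]
    have hbC : (b : G) ∈ Subgroup.centralizer (P : Set G) ⊓ M := ⟨hcent, hB b.2⟩
    rw [hC, Subgroup.mem_bot] at hbC
    exact Subtype.ext hbC
  constructor
  · exact isCyclic_of_surjective (MonoidHom.ofInjective hFinj).symm
      (MulEquiv.surjective _)
  · have h1 : Nat.card ↥B = Nat.card F.range :=
      Nat.card_congr (MonoidHom.ofInjective hFinj).toEquiv
    have h2 : Nat.card F.range ∣ Nat.card (ZMod p)ˣ :=
      Subgroup.card_subgroup_dvd_card F.range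
    have h3 : Nat.card (ZMod p)ˣ = p - 1 := by
      rw [Nat.card_eq_fintype_card, ZMod.card_units_eq_totient, Nat.totient_prime hp]
    rw [h1]
    rwa [h3] at h2
end

section
/- Let G = P ⋊ M be a primitive soluble finite group, where M is a primitivator of G and P is a Sylow p-subgroup of G. Let A and B be subgroups of M with M = AB. If B ≤ N_G(X) for every subgroup X of P, then [A, B] = 1, i.e., every element of A commutes with every element of B. -/
open Subgroup Pointwise
open scoped commutatorElement

universe u

private lemma zpow_eq_zpow_of_modEq' {G : Type*} [Group G] {p : ℕ} {x : G} (hx : x ^ p = 1)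
    {i j : ℤ} (h : i ≡ j [ZMOD (p : ℤ)]) : x ^ i = x ^ j := by
  rw [zpow_eq_zpow_iff_modEq]
  exact h.of_dvd (Int.natCast_dvd_natCast.mpr (orderOf_dvd_of_pow_eq_one hx))

private lemma modEq_of_zpow_eq {G : Type*} [Group G] {p : ℕ} (hp : p.Prime) {x : G}
    (hxp : x ^ p = 1) (hx1 : x ≠ 1) {i j : ℤ} (h : x ^ i = x ^ j) :
    i ≡ j [ZMOD (p : ℤ)] := by
  haveI := Fact.mk hp
  have h2 := zpow_eq_zpow_iff_modEq.mp h
  rwa [orderOf_eq_prime hxp hx1] at h2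

/-- Pairwise coherence of power exponents. -/
private lemma exp_agree {G : Type*} [Group G] [Finite G] {p : ℕ} (hp : p.Prime) (f : G →* G)
    {x z : G} (hcomm : Commute x z) (hxp : x ^ p = 1) (hzp : z ^ p = 1) (hz1 : z ≠ 1)
    {i j : ℤ} (hfx : f x = x ^ i) (hfz : f z = z ^ j)
    (hfxz : f (x * z) ∈ Subgroup.zpowers (x * z)) : x ^ i = x ^ j := by
  haveI := Fact.mk hp
  rcases eq_or_ne x 1 with rfl | hx1
  · simp
  by_cases hzx : z ∈ Subgroup.zpowers x
  · obtain ⟨k, hk⟩ := Subgroup.mem_zpowers_iff.mp hzx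
    have hzz : z ^ j = z ^ i := by
      rw [← hfz, ← hk, map_zpow, hfx, ← zpow_mul, mul_comm i k, zpow_mul]
    exact zpow_eq_zpow_of_modEq' hxp (modEq_of_zpow_eq hp hzp hz1 hzz.symm)
  by_cases hxz : x ∈ Subgroup.zpowers z
  · obtain ⟨k, hk⟩ := Subgroup.mem_zpowers_iff.mp hxz
    rw [← hfx, ← hk, map_zpow, hfz, ← zpow_mul, mul_comm j k, zpow_mul, hk]
  -- now the two cyclic subgroups intersect trivially
  have hint : Subgroup.zpowers x ⊓ Subgroup.zpowers z = ⊥ := by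
    rw [eq_bot_iff]
    intro w hw
    rw [Subgroup.mem_bot]
    by_contra hw1
    obtain ⟨a, ha⟩ := Subgroup.mem_zpowers_iff.mp hw.1
    have hwp : w ^ p = 1 := by
      rw [← ha, ← zpow_natCast, ← zpow_mul, mul_comm a (p : ℤ), zpow_mul, zpow_natCast, hxp,
        one_zpow]
    have hordw : orderOf w = p := orderOf_eq_prime hwp hw1
    have hordx : orderOf x = p := orderOf_eq_prime hxp hx1
    have hle : Subgroup.zpowers w ≤ Subgroup.zpowers x := Subgroup.zpowers_le.mpr hw.1
    have heq : Subgroup.zpowers w = Subgroup.zpowers x := by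
      apply Subgroup.eq_of_le_of_card_ge hle
      rw [Nat.card_zpowers, Nat.card_zpowers, hordw, hordx]
    have : x ∈ Subgroup.zpowers z := by
      have hx_mem : x ∈ Subgroup.zpowers w := by rw [heq]; exact Subgroup.mem_zpowers x
      exact Subgroup.zpowers_le.mpr hw.2 hx_mem
    exact hxz this
  obtain ⟨l, hl⟩ := Subgroup.mem_zpowers_iff.mp hfxz
  have hmain : x ^ i * z ^ j = x ^ l * z ^ l := by
    rw [← hfx, ← hfz, ← map_mul, ← hl, hcomm.mul_zpow]
  have h3 : (x ^ l)⁻¹ * x ^ i = z ^ l * (z ^ j)⁻¹ := by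
    have h4 := congrArg (fun w => (x ^ l)⁻¹ * w * (z ^ j)⁻¹) hmain
    simpa [mul_assoc] using h4
  have hmemx : (x ^ l)⁻¹ * x ^ i ∈ Subgroup.zpowers x ⊓ Subgroup.zpowers z := by
    refine Subgroup.mem_inf.mpr ⟨?_, ?_⟩
    · exact mul_mem (inv_mem (zpow_mem_zpowers x l)) (zpow_mem_zpowers x i)
    · rw [h3]
      exact mul_mem (zpow_mem_zpowers z l) (inv_mem (zpow_mem_zpowers z j))
  rw [hint, Subgroup.mem_bot, inv_mul_eq_one] at hmemx
  -- hmemx : x ^ l = x ^ i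
  have hzlj : z ^ l = z ^ j := by
    rw [← hmemx, inv_mul_cancel] at h3
    exact mul_inv_eq_one.mp h3.symm
  have hlj : l ≡ j [ZMOD (p : ℤ)] := modEq_of_zpow_eq hp hzp hz1 hzlj
  rw [← hmemx]
  exact zpow_eq_zpow_of_modEq' hxp hlj

/-- Let `G = P ⋊ M` be a primitive soluble group, `M` a primitivator of `G` and `P` a
Sylow `p`-subgroup of `G`. If `M = AB` and `B` normalizes every subgroup of `P`,
then `[A, B] = 1`. -/
theorem commutator_eq_bot_of_normalizes_sylow {G : Type u} [Group G] [Finite G]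
    (hsol : IsSolvable G)
    (M : Subgroup G) (hmax : IsCoatom M) (hcore : M.normalCore = ⊥)
    (p : ℕ) (hp : p.Prime) (P : Subgroup G)
    (hsyl : IsSylowSubgroupOf p P ⊤) (hPnorm : P.Normal)
    (hPM1 : P ⊓ M = ⊥) (hPM2 : P ⊔ M = ⊤)
    (A B : Subgroup G) (hA : A ≤ M) (hB : B ≤ M)
    (hM : (A : Set G) * (B : Set G) = (M : Set G))
    (hnormz : ∀ X : Subgroup G, X ≤ P → B ≤ normalizer (X : Set G)) :
    ⁅A, B⁆ = (⊥ : Subgroup G) := by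
  -- P is nontrivial
  have hPne : P ≠ ⊥ := by
    rintro rfl
    rw [bot_sup_eq] at hPM2
    exact hmax.1 hPM2
  -- P is a minimal normal subgroup
  have hmin : ∀ N : Subgroup G, N.Normal → N ≤ P → N ≠ ⊥ → N = P := by
    intro N hN hNP hNbot
    have hNM : ¬N ≤ M := fun h => hNbot (le_bot_iff.mp (hPM1 ▸ le_inf hNP h))
    have htop : N ⊔ M = ⊤ := hmax.2 _ (right_lt_sup.mpr hNM)
    refine le_antisymm hNP ?_
    intro x hx
    haveI := hN
    have hx' : x ∈ (↑(N ⊔ M) : Set G) := by rw [htop]; trivial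
    rw [Subgroup.normal_mul] at hx'
    obtain ⟨n, hn, m, hm, rfl⟩ := hx'
    have hmP : m ∈ P := (mul_mem_cancel_left (hNP hn)).mp hx
    have hm1 : m ∈ P ⊓ M := ⟨hmP, hm⟩
    rw [hPM1, Subgroup.mem_bot] at hm1
    rw [hm1]
    simpa using hn
  -- P is abelian
  have hab : ∀ x ∈ P, ∀ y ∈ P, Commute x y := by
    have hD : ⁅P, P⁆ ≤ P := Subgroup.commutator_le.mpr fun g hg h hh => by
      rw [commutatorElement_def]
      exact mul_mem (mul_mem (mul_mem hg hh) (inv_mem hg)) (inv_mem hh)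
    by_cases hDbot : ⁅P, P⁆ = ⊥
    · intro x hx y hy
      have := Subgroup.commutator_le.mp (le_of_eq hDbot) x hx y hy
      rw [Subgroup.mem_bot] at this
      exact commutatorElement_eq_one_iff_commute.mp this
    · exfalso
      have hDP : ⁅P, P⁆ = P := hmin _ (Subgroup.commutator_normal P P) hD hDbot
      have hle : ∀ n, P ≤ derivedSeries G n := by
        intro n
        induction n with
        | zero => exact le_top
        | succ n ih =>
          rw [derivedSeries_succ]
          calc P = ⁅P, P⁆ := hDP.symm
            _ ≤ ⁅derivedSeries G n, derivedSeries G n⁆ := Subgroup.commutator_mono ih ih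
      obtain ⟨n, hn⟩ := hsol.solvable
      exact hPne (le_bot_iff.mp (hn ▸ hle n))
  -- P has exponent p
  have hexp : ∀ x ∈ P, x ^ p = 1 := by
    have hstep : ∀ k : ℕ, ∀ x ∈ P, x ≠ 1 → x ^ p ^ k = 1 → ∃ y ∈ P, y ≠ 1 ∧ y ^ p = 1 := by
      intro k
      induction k with
      | zero => intro x _ hx1 h; rw [pow_zero, pow_one] at h; exact absurd h hx1
      | succ k ih =>
        intro x hx hx1 h
        by_cases hxp : x ^ p = 1
        · exact ⟨x, hx, hx1, hxp⟩
        · refine ih (x ^ p) (pow_mem hx p) hxp ?_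
          rw [← pow_mul, ← pow_succ']
          exact h
    obtain ⟨x, hxP, hx1⟩ : ∃ x ∈ P, x ≠ 1 := by
      by_contra h
      push_neg at h
      exact hPne (eq_bot_iff.mpr fun g hg => Subgroup.mem_bot.mpr (h g hg))
    obtain ⟨k, hk⟩ := hsyl.2.1 ⟨x, hxP⟩
    have hk' : x ^ p ^ k = 1 := by
      have := congrArg (Subtype.val) hk
      simpa using this
    obtain ⟨y, hyP, hy1, hyp⟩ := hstep k x hxP hx1 hk'
    let S : Subgroup G :=
      { carrier := {g | g ∈ P ∧ g ^ p = 1}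
        one_mem' := ⟨one_mem P, one_pow p⟩
        mul_mem' := fun {a b} ha hb => ⟨mul_mem ha.1 hb.1, by
          rw [(hab a ha.1 b hb.1).mul_pow, ha.2, hb.2, one_mul]⟩
        inv_mem' := fun {a} ha => ⟨inv_mem ha.1, by rw [inv_pow, ha.2, inv_one]⟩ }
    have hSnormal : S.Normal := by
      constructor
      intro a ha g
      refine ⟨hPnorm.conj_mem a ha.1 g, ?_⟩
      rw [conj_pow, ha.2, mul_one, mul_inv_cancel]
    have hSle : S ≤ P := fun g hg => hg.1
    have hSne : S ≠ ⊥ := fun h => hy1 (Subgroup.mem_bot.mp (h ▸ (⟨hyP, hyp⟩ : y ∈ S)))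
    have hSP : S = P := hmin S hSnormal hSle hSne
    intro g hg
    have : g ∈ S := by rw [hSP]; exact hg
    exact this.2
  -- the centralizer of P is normal
  set C := Subgroup.centralizer (P : Set G) with hCdef
  have hCnormal : C.Normal := by
    constructor
    intro c hc g
    rw [Subgroup.mem_centralizer_iff] at hc ⊢
    intro h hh
    have h' : g⁻¹ * h * g ∈ P := by
      have := hPnorm.conj_mem h hh g⁻¹
      simpa using this
    have h2 := hc _ h'
    have := congrArg (fun w => g * w * g⁻¹) h2
    simpa [mul_assoc] using this
  -- C ⊓ M is normal in G, hence trivial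
  have hCMnorm : (C ⊓ M).Normal := by
    constructor
    intro c hc g
    have hg : g ∈ (↑(P ⊔ M) : Set G) := by rw [hPM2]; trivial
    rw [Subgroup.normal_mul] at hg
    obtain ⟨u, hu, m, hm, rfl⟩ := hg
    have hc' : m * c * m⁻¹ ∈ C ⊓ M := Subgroup.mem_inf.mpr
      ⟨hCnormal.conj_mem c (Subgroup.mem_inf.mp hc).1 m,
        mul_mem (mul_mem hm (Subgroup.mem_inf.mp hc).2) (inv_mem hm)⟩
    have hcomm : u * (m * c * m⁻¹) = (m * c * m⁻¹) * u :=
      Subgroup.mem_centralizer_iff.mp (Subgroup.mem_inf.mp hc').1 u hu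
    have h2 : u * (m * c * m⁻¹) * u⁻¹ = m * c * m⁻¹ := mul_inv_eq_iff_eq_mul.mpr hcomm
    have h3 : (u * m) * c * (u * m)⁻¹ = u * (m * c * m⁻¹) * u⁻¹ := by group
    rw [h3, h2]
    exact hc'
  have hCM : C ⊓ M = ⊥ := by
    haveI := hCMnorm
    have := Subgroup.normal_le_normalCore.mpr (inf_le_right : C ⊓ M ≤ M)
    rw [hcore] at this
    exact le_bot_iff.mp this
  -- main argument
  rw [eq_bot_iff, Subgroup.commutator_le]
  intro a ha b hb
  rw [Subgroup.mem_bot]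
  have hmem : ⁅a, b⁆ ∈ C ⊓ M := by
    refine Subgroup.mem_inf.mpr ⟨?_, ?_⟩
    · rw [Subgroup.mem_centralizer_iff]
      intro x hx
      rcases eq_or_ne x 1 with rfl | hx1
      · simp
      set y := b⁻¹ * x * b with hy
      have hbyx : b * y * b⁻¹ = x := by rw [hy]; group
      have hyP : y ∈ P := by
        have := hPnorm.conj_mem x hx b⁻¹
        simpa using this
      have hy1 : y ≠ 1 := fun h => hx1 (by rw [← hbyx, h, mul_one, mul_inv_cancel])
      set z := a⁻¹ * y * a with hz
      have hazy : a * z * a⁻¹ = y := by rw [hz]; group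
      have hzP : z ∈ P := by
        have := hPnorm.conj_mem y hyP a⁻¹
        simpa using this
      have hz1 : z ≠ 1 := fun h => hy1 (by rw [← hazy, h, mul_one, mul_inv_cancel])
      -- exponents
      obtain ⟨i, hi⟩ := Subgroup.mem_zpowers_iff.mp
        ((Subgroup.mem_normalizer_iff.mp
          (hnormz _ (Subgroup.zpowers_le.mpr hyP) hb) y).mp (Subgroup.mem_zpowers y))
      obtain ⟨j, hj⟩ := Subgroup.mem_zpowers_iff.mp
        ((Subgroup.mem_normalizer_iff.mp
          (hnormz _ (Subgroup.zpowers_le.mpr hzP) hb) z).mp (Subgroup.mem_zpowers z))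
      have hfyz : b * (y * z) * b⁻¹ ∈ Subgroup.zpowers (y * z) :=
        (Subgroup.mem_normalizer_iff.mp
          (hnormz _ (Subgroup.zpowers_le.mpr (mul_mem hyP hzP)) hb) (y * z)).mp
          (Subgroup.mem_zpowers (y * z))
      -- apply the coherence lemma with conjugation by b
      set f : G →* G := (MulAut.conj b).toMonoidHom with hf
      have hfy : f y = y ^ i := by simp [hf, MulAut.conj_apply, ← hi]
      have hfz : f z = z ^ j := by simp [hf, MulAut.conj_apply, ← hj]
      have hfyz' : f (y * z) ∈ Subgroup.zpowers (y * z) := by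
        simpa [hf, MulAut.conj_apply] using hfyz
      have hij : y ^ i = y ^ j :=
        exp_agree hp f (hab y hyP z hzP) (hexp y hyP) (hexp z hzP) hz1 hfy hfz hfyz'
      -- compute the conjugation of x by the commutator
      have e1 : ⁅a, b⁆ * x * ⁅a, b⁆⁻¹ = a * (b * z * b⁻¹) * a⁻¹ := by
        rw [commutatorElement_def, hz, hy]
        group
      rw [← hj, ← conj_zpow, hazy, ← hij, hi, hbyx] at e1
      exact (mul_inv_eq_iff_eq_mul.mp e1).symm
    · rw [commutatorElement_def]
      exact mul_mem (mul_mem (mul_mem (hA ha) (hB hb)) (inv_mem (hA ha))) (inv_mem (hB hb))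
  rw [hCM, Subgroup.mem_bot] at hmem
  exact hmem
end
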